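/- arXiv:1011.1633 — 14 statements merged into one kernel-verified Lean document; each statement's English description precedes it below -/
import Mathlib

section
/- Let H be a subgroup of a group E, p : E → H an H-linear retraction, S = p⁻¹(1), and ▷, ◁, f, ∗ the maps defined from p. Then: (i) the normalization conditions s ▷ 1 = 1, 1 ▷ h = h, 1 ◁ h = 1, s ◁ 1 = s, f(s, 1) = f(1, s) = 1, s ∗ 1 = 1 ∗ s = s hold for all s ∈ S, h ∈ H (where 1 ∈ S is the unit of E); (ii) the twisted associativity condition (s₁ ∗ s₂) ∗ s₃ = (s₁ ◁ f(s₂, s₃)) ∗ (s₂ ∗ s₃) holds for all s₁, s₂, s₃ ∈ S; (iii) for every s ∈ S there exists a unique s' ∈ S such that s' ∗ s = 1. -/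
/-- Let `H` be a subgroup of a group `E`, `p : E → H` an `H`-linear retraction,
`S = p⁻¹(1)`, and `▷, ◁, f, ∗` the maps defined from `p`:
`s ▷ h = p (s h)`, `s ◁ h = p (s h)⁻¹ s h`, `f (a, b) = p (a b)`,
`a ∗ b = p (a b)⁻¹ a b`. Then:
(i) the normalization conditions `s ▷ 1 = 1`, `1 ▷ h = h`, `1 ◁ h = 1`, `s ◁ 1 = s`,
`f (s, 1) = f (1, s) = 1`, `s ∗ 1 = 1 ∗ s = s` hold;
(ii) the twisted associativity condition
`(s₁ ∗ s₂) ∗ s₃ = (s₁ ◁ f (s₂, s₃)) ∗ (s₂ ∗ s₃)` holds;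
(iii) every `s ∈ S` has a unique `s' ∈ S` with `s' ∗ s = 1`. -/
theorem retraction_normalization_twisted_assoc {E : Type*} [Group E] (H : Subgroup E)
    (p : E → H) (hp1 : p 1 = 1) (hp : ∀ (h : H) (x : E), p (↑h * x) = h * p x)
    (rho : E → H → H) (hrho : ∀ (s : E) (h : H), rho s h = p (s * ↑h))
    (act : E → H → E) (hact : ∀ (s : E) (h : H), act s h = (↑(p (s * ↑h)))⁻¹ * (s * ↑h))
    (f : E → E → H) (hf : ∀ a b : E, f a b = p (a * b))
    (star : E → E → E) (hstar : ∀ a b : E, star a b = (↑(p (a * b)))⁻¹ * (a * b)) :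
    (∀ s : E, p s = 1 → ∀ h : H,
      rho s 1 = 1 ∧ rho 1 h = h ∧ act 1 h = 1 ∧ act s 1 = s ∧
      f s 1 = 1 ∧ f 1 s = 1 ∧ star s 1 = s ∧ star 1 s = s) ∧
    (∀ s₁ s₂ s₃ : E, p s₁ = 1 → p s₂ = 1 → p s₃ = 1 →
      star (star s₁ s₂) s₃ = star (act s₁ (f s₂ s₃)) (star s₂ s₃)) ∧
    (∀ s : E, p s = 1 → ∃! s' : E, p s' = 1 ∧ star s' s = 1) := by
  -- p is the identity on H
  have pH : ∀ h : H, p ↑h = h := by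
    intro h
    have := hp h 1
    simpa [hp1] using this
  -- p (↑h * x) key rewriting, and p (↑h⁻¹ * x) form
  have pHinv : ∀ (h : H) (x : E), p ((↑h)⁻¹ * x) = h⁻¹ * p x := by
    intro h x
    have := hp h⁻¹ x
    simpa using this
  refine ⟨?_, ?_, ?_⟩
  · intro s hs h
    refine ⟨?_, ?_, ?_, ?_, ?_, ?_, ?_, ?_⟩
    · rw [hrho]; simpa using hs
    · rw [hrho]; simpa using pH h
    · rw [hact]
      have : p ((1 : E) * ↑h) = h := by simpa using pH h
      rw [this]; group
    · rw [hact]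
      have : p (s * ↑(1 : H)) = 1 := by simpa using hs
      rw [this]; simp
    · rw [hf]; simpa using hs
    · rw [hf]; simpa using hs
    · rw [hstar]
      have : p (s * 1) = 1 := by simpa using hs
      rw [this]; simp
    · rw [hstar]
      have : p ((1 : E) * s) = 1 := by simpa using hs
      rw [this]; simp
  · intro s₁ s₂ s₃ _ _ _
    -- LHS
    have hL : star (star s₁ s₂) s₃ = (↑(p (s₁ * s₂ * s₃)))⁻¹ * (s₁ * s₂ * s₃) := by
      rw [hstar, hstar]
      have h1 : (↑(p (s₁ * s₂)))⁻¹ * (s₁ * s₂) * s₃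
          = (↑((p (s₁ * s₂))⁻¹) : E) * (s₁ * s₂ * s₃) := by
        push_cast; group
      rw [h1, hp]
      push_cast; group
    have hR : star (act s₁ (f s₂ s₃)) (star s₂ s₃)
        = (↑(p (s₁ * s₂ * s₃)))⁻¹ * (s₁ * s₂ * s₃) := by
      rw [hstar, hact, hstar, hf]
      have h2 : (↑(p (s₁ * ↑(p (s₂ * s₃)))))⁻¹ * (s₁ * ↑(p (s₂ * s₃)))
            * ((↑(p (s₂ * s₃)))⁻¹ * (s₂ * s₃))
          = (↑((p (s₁ * ↑(p (s₂ * s₃))))⁻¹) : E) * (s₁ * s₂ * s₃) := by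
        push_cast; group
      rw [h2, hp]
      push_cast; group
    rw [hL, hR]
  · intro s hs
    refine ⟨(↑((p s⁻¹)⁻¹) : E) * s⁻¹, ⟨?_, ?_⟩, ?_⟩
    · rw [hp]; simp
    · rw [hstar]
      have h3 : (↑((p s⁻¹)⁻¹) : E) * s⁻¹ * s = ↑((p s⁻¹)⁻¹) := by group
      rw [h3, pH]
      push_cast; group
    · intro y ⟨hy, hys⟩
      rw [hstar] at hys
      have h4 : (↑(p (y * s)) : E) = y * s := inv_mul_eq_one.mp hys
      have h5 : y = ↑(p (y * s)) * s⁻¹ := by rw [h4]; group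
      have h6 : p y = p (y * s) * p s⁻¹ := by
        conv_lhs => rw [h5]
        rw [hp]
      rw [hy] at h6
      have h7 : p (y * s) = (p s⁻¹)⁻¹ := eq_inv_of_mul_eq_one_left h6.symm
      rw [h5, h7]
end

section
/- Let H be a group and Ω(H) = ((S, 1_S, ∗), ◁, ▷, f) an extending datum of H. Then the multiplication (h₁, s₁) · (h₂, s₂) = (h₁ (s₁ ▷ h₂) f(s₁ ◁ h₂, s₂), (s₁ ◁ h₂) ∗ s₂) makes H × S a group (with unit (1_H, 1_S)) if and only if the following seven conditions hold for all s, s₁, s₂, s₃ ∈ S and h, h₁, h₂ ∈ H: (ES1) s ◁ (h₁ h₂) = (s ◁ h₁) ◁ h₂ (so ◁ is a right action of H on S); (ES2) (s₁ ∗ s₂) ∗ s₃ = (s₁ ◁ f(s₂, s₃)) ∗ (s₂ ∗ s₃); (ES3) s ▷ (h₁ h₂) = (s ▷ h₁)((s ◁ h₁) ▷ h₂); (ES4) (s₁ ∗ s₂) ◁ h = (s₁ ◁ (s₂ ▷ h)) ∗ (s₂ ◁ h); (ES5) (s₁ ▷ (s₂ ▷ h)) f(s₁ ◁ (s₂ ▷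 h), s₂ ◁ h) = f(s₁, s₂)((s₁ ∗ s₂) ▷ h); (ES6) f(s₁, s₂) f(s₁ ∗ s₂, s₃) = (s₁ ▷ f(s₂, s₃)) f(s₁ ◁ f(s₂, s₃), s₂ ∗ s₃); (ES7) for every s ∈ S there exists s' ∈ S with s' ∗ s = 1_S. -/
universe u v

/-- An extending datum `Ω(H) = ((S, 1_S, ∗), ◁, ▷, f)` of a group `H`:
a pointed set `(S, one)`, a binary operation `mul = ∗` with unit `one`,
maps `act = ◁ : S × H → S`, `rho = ▷ : S × H → H`, `f : S × S → H`
satisfying the normalization conditions. -/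
structure ExtendingDatum (H : Type u) [Group H] (S : Type v) where
  one : S
  mul : S → S → S
  act : S → H → S
  rho : S → H → H
  f : S → S → H
  mul_one' : ∀ s, mul s one = s
  one_mul' : ∀ s, mul one s = s
  act_one' : ∀ s, act s 1 = s
  one_act' : ∀ h, act one h = one
  one_rho' : ∀ h, rho one h = h
  rho_one' : ∀ s, rho s 1 = 1
  f_one_right' : ∀ s, f s one = 1
  f_one_left' : ∀ s, f one s = 1

variable {H : Type u} [Group H] {S : Type v}

/-- The multiplication of the (prospective) unified product `H ⋉ S` on the set `H × S`:
`(h₁, s₁) · (h₂, s₂) = (h₁ (s₁ ▷ h₂) f(s₁ ◁ h₂, s₂), (s₁ ◁ h₂) ∗ s₂)`. -/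
def ExtendingDatum.Mul (Ω : ExtendingDatum H S) (x y : H × S) : H × S :=
  (x.1 * Ω.rho x.2 y.1 * Ω.f (Ω.act x.2 y.1) y.2, Ω.mul (Ω.act x.2 y.1) y.2)

/-- `Ω` is a group extending structure of `H` when the multiplication `Ω.Mul` makes
`H × S` a group with unit `(1_H, 1_S)` (a monoid in which every element has a left
inverse is a group). The resulting group is the unified product `H ⋉ S`. -/
def IsGroupExtendingStructure (Ω : ExtendingDatum H S) : Prop :=
  (∀ a b c : H × S, Ω.Mul (Ω.Mul a b) c = Ω.Mul a (Ω.Mul b c)) ∧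
  (∀ a : H × S, Ω.Mul ((1 : H), Ω.one) a = a) ∧
  (∀ a : H × S, Ω.Mul a ((1 : H), Ω.one) = a) ∧
  (∀ a : H × S, ∃ b : H × S, Ω.Mul b a = ((1 : H), Ω.one))

/-- **Theorem (construction of the unified product).** Let `H` be a group and
`Ω(H) = ((S, 1_S, ∗), ◁, ▷, f)` an extending datum of `H`. The multiplication
`(h₁, s₁) · (h₂, s₂) = (h₁ (s₁ ▷ h₂) f(s₁ ◁ h₂, s₂), (s₁ ◁ h₂) ∗ s₂)` makes
`H × S` a group (with unit `(1_H, 1_S)`) if and only if the axioms (ES1)–(ES7) hold. -/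
theorem isGroupExtendingStructure_iff (Ω : ExtendingDatum H S) :
    IsGroupExtendingStructure Ω ↔
      ((∀ (s : S) (h₁ h₂ : H), Ω.act s (h₁ * h₂) = Ω.act (Ω.act s h₁) h₂) ∧
       (∀ s₁ s₂ s₃ : S,
          Ω.mul (Ω.mul s₁ s₂) s₃ = Ω.mul (Ω.act s₁ (Ω.f s₂ s₃)) (Ω.mul s₂ s₃)) ∧
       (∀ (s : S) (h₁ h₂ : H),
          Ω.rho s (h₁ * h₂) = Ω.rho s h₁ * Ω.rho (Ω.act s h₁) h₂) ∧
       (∀ (s₁ s₂ : S) (h : H),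
          Ω.act (Ω.mul s₁ s₂) h = Ω.mul (Ω.act s₁ (Ω.rho s₂ h)) (Ω.act s₂ h)) ∧
       (∀ (s₁ s₂ : S) (h : H),
          Ω.rho s₁ (Ω.rho s₂ h) * Ω.f (Ω.act s₁ (Ω.rho s₂ h)) (Ω.act s₂ h)
            = Ω.f s₁ s₂ * Ω.rho (Ω.mul s₁ s₂) h) ∧
       (∀ s₁ s₂ s₃ : S,
          Ω.f s₁ s₂ * Ω.f (Ω.mul s₁ s₂) s₃
            = Ω.rho s₁ (Ω.f s₂ s₃) * Ω.f (Ω.act s₁ (Ω.f s₂ s₃)) (Ω.mul s₂ s₃)) ∧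
       (∀ s : S, ∃ s' : S, Ω.mul s' s = Ω.one)) := by
  constructor
  · rintro ⟨hA, hL, hR, hI⟩
    refine ⟨?_, ?_, ?_, ?_, ?_, ?_, ?_⟩
    · intro s h₁ h₂
      have h := hA ((1 : H), s) (h₁, Ω.one) (h₂, Ω.one)
      simp only [ExtendingDatum.Mul, Ω.mul_one', Ω.act_one', Ω.one_act', Ω.one_rho',
        Ω.rho_one', Ω.f_one_right', Ω.f_one_left', one_mul, mul_one, Prod.mk.injEq] at h
      exact h.2.symm
    · intro s₁ s₂ s₃
      have h := hA ((1 : H), s₁) ((1 : H), s₂) ((1 : H), s₃)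
      simp only [ExtendingDatum.Mul, Ω.mul_one', Ω.act_one', Ω.one_act', Ω.one_rho',
        Ω.rho_one', Ω.f_one_right', Ω.f_one_left', one_mul, mul_one, Prod.mk.injEq] at h
      exact h.2
    · intro s h₁ h₂
      have h := hA ((1 : H), s) (h₁, Ω.one) (h₂, Ω.one)
      simp only [ExtendingDatum.Mul, Ω.mul_one', Ω.act_one', Ω.one_act', Ω.one_rho',
        Ω.rho_one', Ω.f_one_right', Ω.f_one_left', one_mul, mul_one, Prod.mk.injEq] at h
      exact h.1.symm
    · intro s₁ s₂ h
      have hh := hA ((1 : H), s₁) ((1 : H), s₂) (h, Ω.one)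
      simp only [ExtendingDatum.Mul, Ω.mul_one', Ω.act_one', Ω.one_act', Ω.one_rho',
        Ω.rho_one', Ω.f_one_right', Ω.f_one_left', one_mul, mul_one, Prod.mk.injEq] at hh
      exact hh.2
    · intro s₁ s₂ h
      have hh := hA ((1 : H), s₁) ((1 : H), s₂) (h, Ω.one)
      simp only [ExtendingDatum.Mul, Ω.mul_one', Ω.act_one', Ω.one_act', Ω.one_rho',
        Ω.rho_one', Ω.f_one_right', Ω.f_one_left', one_mul, mul_one, Prod.mk.injEq] at hh
      exact hh.1.symm
    · intro s₁ s₂ s₃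
      have h := hA ((1 : H), s₁) ((1 : H), s₂) ((1 : H), s₃)
      simp only [ExtendingDatum.Mul, Ω.mul_one', Ω.act_one', Ω.one_act', Ω.one_rho',
        Ω.rho_one', Ω.f_one_right', Ω.f_one_left', one_mul, mul_one, Prod.mk.injEq] at h
      exact h.1
    · intro s
      obtain ⟨⟨g, t⟩, hb⟩ := hI ((1 : H), s)
      refine ⟨t, ?_⟩
      have := congrArg Prod.snd hb
      simpa only [ExtendingDatum.Mul, Ω.act_one'] using this
  · rintro ⟨es1, es2, es3, es4, es5, es6, es7⟩
    refine ⟨?_, ?_, ?_, ?_⟩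
    · rintro ⟨h1, s1⟩ ⟨h2, s2⟩ ⟨h3, s3⟩
      simp only [ExtendingDatum.Mul, Prod.mk.injEq]
      constructor
      · -- first component
        have key : Ω.rho s1 (h2 * Ω.rho s2 h3 * Ω.f (Ω.act s2 h3) s3)
            = Ω.rho s1 h2 * Ω.rho (Ω.act s1 h2) (Ω.rho s2 h3)
              * Ω.rho (Ω.act (Ω.act s1 h2) (Ω.rho s2 h3)) (Ω.f (Ω.act s2 h3) s3) := by
          rw [es3, es3, es1]
        have keyact : Ω.act s1 (h2 * Ω.rho s2 h3 * Ω.f (Ω.act s2 h3) s3)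
            = Ω.act (Ω.act (Ω.act s1 h2) (Ω.rho s2 h3)) (Ω.f (Ω.act s2 h3) s3) := by
          rw [es1, es1]
        rw [key, keyact]
        set A := Ω.act s1 h2 with hAdef
        set B := Ω.act A (Ω.rho s2 h3) with hBdef
        set C := Ω.act s2 h3 with hCdef
        calc h1 * Ω.rho s1 h2 * Ω.f A s2 * Ω.rho (Ω.mul A s2) h3
              * Ω.f (Ω.act (Ω.mul A s2) h3) s3
            = h1 * Ω.rho s1 h2 * (Ω.f A s2 * Ω.rho (Ω.mul A s2) h3)
              * Ω.f (Ω.act (Ω.mul A s2) h3) s3 := by group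
          _ = h1 * Ω.rho s1 h2 * (Ω.rho A (Ω.rho s2 h3) * Ω.f B C)
              * Ω.f (Ω.mul B C) s3 := by rw [← es5, es4]
          _ = h1 * (Ω.rho s1 h2 * Ω.rho A (Ω.rho s2 h3))
              * (Ω.f B C * Ω.f (Ω.mul B C) s3) := by group
          _ = h1 * (Ω.rho s1 h2 * Ω.rho A (Ω.rho s2 h3))
              * (Ω.rho B (Ω.f C s3) * Ω.f (Ω.act B (Ω.f C s3)) (Ω.mul C s3)) := by
                rw [es6]
          _ = h1 * (Ω.rho s1 h2 * Ω.rho A (Ω.rho s2 h3) * Ω.rho B (Ω.f C s3))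
              * Ω.f (Ω.act B (Ω.f C s3)) (Ω.mul C s3) := by group
      · rw [es4, es2, es1, es1]
    · rintro ⟨h, s⟩
      simp only [ExtendingDatum.Mul, Ω.one_act', Ω.one_rho', Ω.one_mul', Ω.f_one_left',
        one_mul, mul_one]
    · rintro ⟨h, s⟩
      simp only [ExtendingDatum.Mul, Ω.act_one', Ω.rho_one', Ω.mul_one', Ω.f_one_right',
        one_mul, mul_one]
    · rintro ⟨h, s⟩
      obtain ⟨s', hs'⟩ := es7 s
      have ht : Ω.act (Ω.act s' h⁻¹) h = s' := by
        rw [← es1, inv_mul_cancel, Ω.act_one']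
      refine ⟨((Ω.rho (Ω.act s' h⁻¹) h * Ω.f s' s)⁻¹, Ω.act s' h⁻¹), ?_⟩
      simp only [ExtendingDatum.Mul, ht, hs', Prod.mk.injEq]
      constructor
      · group
      · trivial
end

section
/- Let H be a group, E a set containing H, and · a group structure on E such that H is a subgroup of (E, ·). Then there exists a group extending structure Ω(H) = ((S, 1_S, ∗), ◁, ▷, f) of H and an isomorphism of groups ψ : H ⋉ S → (E, ·) such that ψ(h, 1_S) = h for all h ∈ H (i.e., ψ stabilizes H). -/
universe u v

variable {H : Type u} [Group H] {S : Type v}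

namespace UnifiedAux

variable {E : Type u} [Group E] (K : Subgroup E)

/-- Set of right cosets. -/
abbrev Q := Quotient (QuotientGroup.rightRel K)

open Classical in
/-- Section choosing a representative, with `σ ⟦1⟧ = 1`. -/
noncomputable def σ (s : Q K) : E :=
  if s = Quotient.mk (QuotientGroup.rightRel K) 1 then 1 else s.out

lemma mk_σ (s : Q K) : Quotient.mk (QuotientGroup.rightRel K) (σ K s) = s := by
  classical
  unfold σ
  split
  · next h => rw [h]
  · exact Quotient.out_eq s

lemma σ_one : σ K (Quotient.mk (QuotientGroup.rightRel K) 1) = 1 := by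
  classical simp [σ]

lemma σ_mem (x : E) :
    x * (σ K (Quotient.mk (QuotientGroup.rightRel K) x))⁻¹ ∈ K := by
  have h := mk_σ K (Quotient.mk (QuotientGroup.rightRel K) x)
  rw [Quotient.eq''] at h
  rw [QuotientGroup.rightRel_apply] at h
  simpa using h

lemma mk_eq_of_mem {x y : E} (h : y * x⁻¹ ∈ K) :
    Quotient.mk (QuotientGroup.rightRel K) x = Quotient.mk (QuotientGroup.rightRel K) y :=
  Quotient.sound (QuotientGroup.rightRel_apply.mpr h)

/-- The canonical extending datum attached to a subgroup. -/
noncomputable def datum : ExtendingDatum K (Q K) where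
  one := Quotient.mk (QuotientGroup.rightRel K) 1
  mul s t := Quotient.mk (QuotientGroup.rightRel K) (σ K s * σ K t)
  act s h := Quotient.mk (QuotientGroup.rightRel K) (σ K s * ↑h)
  rho s h := ⟨σ K s * ↑h *
      (σ K (Quotient.mk (QuotientGroup.rightRel K) (σ K s * ↑h)))⁻¹, σ_mem K _⟩
  f s t := ⟨σ K s * σ K t *
      (σ K (Quotient.mk (QuotientGroup.rightRel K) (σ K s * σ K t)))⁻¹, σ_mem K _⟩
  mul_one' s := by rw [σ_one, mul_one, mk_σ]
  one_mul' s := by rw [σ_one, one_mul, mk_σ]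
  act_one' s := by rw [OneMemClass.coe_one, mul_one, mk_σ]
  one_act' h := by
    refine (mk_eq_of_mem K ?_).symm
    simpa [σ_one] using h.2
  one_rho' h := by
    have h1 : Quotient.mk (QuotientGroup.rightRel K) (↑h : E)
        = Quotient.mk (QuotientGroup.rightRel K) 1 :=
      mk_eq_of_mem K (by simpa using K.inv_mem h.2)
    apply Subtype.ext
    simp [σ_one, h1]
  rho_one' s := by
    apply Subtype.ext
    simp [mk_σ]
  f_one_right' s := by
    apply Subtype.ext
    simp [σ_one, mk_σ]
  f_one_left' s := by
    apply Subtype.ext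
    simp [σ_one, mk_σ]

/-- The reconstruction map. -/
noncomputable def ψ (p : K × Q K) : E := ↑p.1 * σ K p.2

lemma ψ_mul (a b : K × Q K) :
    ψ K ((datum K).Mul a b) = ψ K a * ψ K b := by
  obtain ⟨h1, s1⟩ := a
  obtain ⟨h2, s2⟩ := b
  simp only [ψ, ExtendingDatum.Mul, datum, MulMemClass.coe_mul]
  group

lemma ψ_one_right (h : K) : ψ K (h, (datum K).one) = ↑h := by
  simp [ψ, datum, σ_one]

lemma ψ_injective : Function.Injective (ψ K) := by
  rintro ⟨h1, s1⟩ ⟨h2, s2⟩ heq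
  simp only [ψ] at heq
  have key : (↑h2 : E) * (σ K s2 * (σ K s1)⁻¹) = ↑h1 := by
    rw [← mul_assoc, ← heq]; group
  have key2 : σ K s2 * (σ K s1)⁻¹ = (↑h2 : E)⁻¹ * ↑h1 := by
    rw [← key]; group
  have hmem : σ K s2 * (σ K s1)⁻¹ ∈ K := key2 ▸ K.mul_mem (K.inv_mem h2.2) h1.2
  have hs : s1 = s2 := by
    rw [← mk_σ K s1, ← mk_σ K s2]
    exact mk_eq_of_mem K hmem
  subst hs
  have : (↑h1 : E) = ↑h2 := mul_right_cancel heq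
  exact Prod.ext (Subtype.ext this) rfl

lemma ψ_surjective : Function.Surjective (ψ K) := by
  intro e
  refine ⟨(⟨e * (σ K (Quotient.mk (QuotientGroup.rightRel K) e))⁻¹, σ_mem K e⟩,
    Quotient.mk (QuotientGroup.rightRel K) e), ?_⟩
  simp [ψ]

end UnifiedAux

/-- Let `H` be a subgroup of a group `(E, ·)`. Then there exists a group extending
structure `Ω(H) = ((S, 1_S, ∗), ◁, ▷, f)` of `H` and an isomorphism of groups
`ψ : H ⋉ S → (E, ·)` (a bijective map that transforms the unified product
multiplication into the multiplication of `E`) such that `ψ (h, 1_S) = h` for all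
`h ∈ H`, i.e. `ψ` stabilizes `H`. -/
theorem exists_unified_product_iso {E : Type u} [Group E] (K : Subgroup E) :
    ∃ (S : Type u) (Ω : ExtendingDatum K S),
      IsGroupExtendingStructure Ω ∧
      ∃ ψ : K × S → E,
        Function.Bijective ψ ∧
        (∀ a b : K × S, ψ (Ω.Mul a b) = ψ a * ψ b) ∧
        ∀ h : K, ψ (h, Ω.one) = ↑h := by
  refine ⟨UnifiedAux.Q K, UnifiedAux.datum K, ?_,
    UnifiedAux.ψ K, ⟨UnifiedAux.ψ_injective K, UnifiedAux.ψ_surjective K⟩,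
    UnifiedAux.ψ_mul K, UnifiedAux.ψ_one_right K⟩
  have hinj := UnifiedAux.ψ_injective K
  have hmul := UnifiedAux.ψ_mul K
  have hone : UnifiedAux.ψ K ((1 : K), (UnifiedAux.datum K).one) = 1 := by
    simpa using UnifiedAux.ψ_one_right K 1
  refine ⟨fun a b c => hinj ?_, fun a => hinj ?_, fun a => hinj ?_, fun a => ?_⟩
  · rw [hmul, hmul, hmul, hmul, mul_assoc]
  · rw [hmul, hone, one_mul]
  · rw [hmul, hone, mul_one]
  · obtain ⟨b, hb⟩ := UnifiedAux.ψ_surjective K (UnifiedAux.ψ K a)⁻¹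
    exact ⟨b, hinj (by rw [hmul, hb, inv_mul_cancel, hone])⟩
end

section
/- Let H be a group. A system Ω(H) = ((S, 1_S, ∗), ◁, ▷, f) is a group extending structure of H if and only if there exists a group E containing H as a subgroup and a map p : E → H with p(1) = 1 and p(h·x) = h·p(x) for all h ∈ H, x ∈ E, such that S = p⁻¹(1) and the operations are given by s ▷ h = p(s h), s ◁ h = p(s h)⁻¹ s h, f(s₁, s₂) = p(s₁ s₂), s₁ ∗ s₂ = p(s₁ s₂)⁻¹ s₁ s₂ for all s, s₁, s₂ ∈ S and h ∈ H. -/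
universe u v

variable {H : Type u} [Group H] {S : Type v}

/-- A realization of an extending datum `Ω` of `H` on `S`: a group `E` containing `H`
as a subgroup (via the injective morphism `i`), together with a map `p : E → H` with
`p 1 = 1` and `p (h x) = h p x`, such that `S` is identified (via the injection `e`)
with the fiber `p⁻¹(1)` in such a way that the distinguished point and the four
operations of `Ω` correspond to the ones induced by `p`:
`s ▷ h = p (s h)`, `s ◁ h = p (s h)⁻¹ s h`, `f (s₁, s₂) = p (s₁ s₂)`,
`s₁ ∗ s₂ = p (s₁ s₂)⁻¹ s₁ s₂`. -/
structure Realization {H : Type u} [Group H] {S : Type v}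
    (Ω : ExtendingDatum H S) where
  E : Type (max u v)
  [grp : Group E]
  i : H →* E
  i_inj : Function.Injective i
  p : E → H
  p_one : p 1 = 1
  p_linear : ∀ (h : H) (x : E), p (i h * x) = h * p x
  e : S → E
  e_inj : Function.Injective e
  mem_range_iff : ∀ x : E, p x = 1 ↔ ∃ s : S, e s = x
  e_one : e Ω.one = 1
  rho_eq : ∀ (s : S) (h : H), Ω.rho s h = p (e s * i h)
  act_eq : ∀ (s : S) (h : H), e (Ω.act s h) = (i (p (e s * i h)))⁻¹ * (e s * i h)
  f_eq : ∀ s₁ s₂ : S, Ω.f s₁ s₂ = p (e s₁ * e s₂)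
  mul_eq : ∀ s₁ s₂ : S,
    e (Ω.mul s₁ s₂) = (i (p (e s₁ * e s₂)))⁻¹ * (e s₁ * e s₂)

attribute [instance] Realization.grp

section Aux

variable (Ω : ExtendingDatum H S)

/-- Forward direction: build a realization from a group extending structure. -/
noncomputable def ExtendingDatum.realizationOf (hΩ : IsGroupExtendingStructure Ω) :
    Realization Ω := by
  obtain ⟨hassoc, honemul, hmulone, hinv⟩ := hΩ
  letI : _root_.Mul (H × S) := ⟨Ω.Mul⟩
  letI : One (H × S) := ⟨((1 : H), Ω.one)⟩
  letI : Inv (H × S) := ⟨fun a => Classical.choose (hinv a)⟩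
  letI grp : Group (H × S) :=
    Group.ofLeftAxioms hassoc honemul (fun a => Classical.choose_spec (hinv a))
  have mul_def : ∀ x y : H × S, x * y = Ω.Mul x y := fun _ _ => rfl
  refine
    { E := H × S
      grp := grp
      i := { toFun := fun h => (h, Ω.one), map_one' := rfl,
             map_mul' := fun h₁ h₂ => by
               simp [mul_def, ExtendingDatum.Mul, Ω.one_act', Ω.one_rho',
                 Ω.f_one_right', Ω.mul_one'] }
      i_inj := fun h₁ h₂ hh => congrArg Prod.fst hh
      p := fun x => x.1
      p_one := rfl
      p_linear := fun h x => by
        simp [mul_def, ExtendingDatum.Mul, Ω.one_act', Ω.one_rho', Ω.f_one_left']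
      e := fun s => ((1 : H), s)
      e_inj := fun s₁ s₂ hs => congrArg Prod.snd hs
      mem_range_iff := fun x =>
        ⟨fun hx => ⟨x.2, by rw [← hx]⟩, fun ⟨s, hs⟩ => by rw [← hs]⟩
      e_one := rfl
      rho_eq := ?_
      act_eq := ?_
      f_eq := ?_
      mul_eq := ?_ }
  · intro s h
    simp [mul_def, ExtendingDatum.Mul, Ω.f_one_right', Ω.mul_one']
  · intro s h
    have key : (((1 : H), s) * ((h, Ω.one) : H × S)) = (Ω.rho s h, Ω.act s h) := by
      simp [mul_def, ExtendingDatum.Mul, Ω.f_one_right', Ω.mul_one']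
    show ((1 : H), Ω.act s h)
        = (((((1 : H), s) * ((h, Ω.one) : H × S)).1, Ω.one) : H × S)⁻¹
          * (((1 : H), s) * ((h, Ω.one) : H × S))
    rw [key]
    rw [eq_inv_mul_iff_mul_eq]
    simp [mul_def, ExtendingDatum.Mul, Ω.one_act', Ω.one_rho', Ω.f_one_left',
      Ω.one_mul', Ω.rho_one', Ω.act_one']
  · intro s₁ s₂
    simp [mul_def, ExtendingDatum.Mul, Ω.rho_one', Ω.act_one']
  · intro s₁ s₂
    have key : (((1 : H), s₁) * (((1 : H), s₂) : H × S))
        = (Ω.f s₁ s₂, Ω.mul s₁ s₂) := by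
      simp [mul_def, ExtendingDatum.Mul, Ω.rho_one', Ω.act_one']
    show ((1 : H), Ω.mul s₁ s₂)
        = (((((1 : H), s₁) * (((1 : H), s₂) : H × S)).1, Ω.one) : H × S)⁻¹
          * (((1 : H), s₁) * (((1 : H), s₂) : H × S))
    rw [key]
    rw [eq_inv_mul_iff_mul_eq]
    simp [mul_def, ExtendingDatum.Mul, Ω.one_act', Ω.one_rho', Ω.f_one_left',
      Ω.one_mul', Ω.rho_one', Ω.act_one']

end Aux

section Back

variable {Ω : ExtendingDatum H S} (R : Realization Ω)

/-- The embedding of `H × S` into `E`. -/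
def Realization.phi (x : H × S) : R.E := R.i x.1 * R.e x.2

theorem Realization.p_e (s : S) : R.p (R.e s) = 1 :=
  (R.mem_range_iff _).2 ⟨s, rfl⟩

theorem Realization.key_rho (s : S) (h : H) :
    R.i (Ω.rho s h) * R.e (Ω.act s h) = R.e s * R.i h := by
  rw [R.act_eq, R.rho_eq]
  group

theorem Realization.key_f (s₁ s₂ : S) :
    R.i (Ω.f s₁ s₂) * R.e (Ω.mul s₁ s₂) = R.e s₁ * R.e s₂ := by
  rw [R.mul_eq, R.f_eq]
  group

theorem Realization.phi_mul (x y : H × S) :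
    R.phi (Ω.Mul x y) = R.phi x * R.phi y := by
  obtain ⟨h₁, s₁⟩ := x
  obtain ⟨h₂, s₂⟩ := y
  show R.i (h₁ * Ω.rho s₁ h₂ * Ω.f (Ω.act s₁ h₂) s₂) * R.e (Ω.mul (Ω.act s₁ h₂) s₂)
      = (R.i h₁ * R.e s₁) * (R.i h₂ * R.e s₂)
  rw [map_mul, map_mul, mul_assoc (R.i h₁ * R.i (Ω.rho s₁ h₂)), R.key_f,
    mul_assoc (R.i h₁), ← mul_assoc (R.i (Ω.rho s₁ h₂)), R.key_rho]
  group

theorem Realization.p_phi (x : H × S) : R.p (R.phi x) = x.1 := by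
  rw [Realization.phi, R.p_linear, R.p_e, mul_one]

theorem Realization.phi_inj : Function.Injective R.phi := by
  intro a b hab
  have h1 : a.1 = b.1 := by rw [← R.p_phi a, ← R.p_phi b, hab]
  have h2 : R.e a.2 = R.e b.2 := by
    have := hab
    rw [Realization.phi, Realization.phi, h1] at this
    exact mul_left_cancel this
  exact Prod.ext h1 (R.e_inj h2)

theorem Realization.phi_surj : Function.Surjective R.phi := by
  intro x
  have hp : R.p (R.i (R.p x)⁻¹ * x) = 1 := by
    rw [R.p_linear, inv_mul_cancel]
  obtain ⟨s, hs⟩ := (R.mem_range_iff _).1 hp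
  refine ⟨(R.p x, s), ?_⟩
  show R.i (R.p x) * R.e s = x
  rw [hs, ← mul_assoc, ← map_mul, mul_inv_cancel, map_one, one_mul]

theorem Realization.phi_one : R.phi ((1 : H), Ω.one) = 1 := by
  rw [Realization.phi]
  simp [R.e_one]

/-- Backward direction. -/
theorem Realization.isGroupExtendingStructure' (R : Realization Ω) :
    IsGroupExtendingStructure Ω := by
  refine ⟨?_, ?_, ?_, ?_⟩
  · intro a b c
    apply R.phi_inj
    rw [R.phi_mul, R.phi_mul, R.phi_mul, R.phi_mul, mul_assoc]
  · intro a
    obtain ⟨h, s⟩ := a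
    show (_, _) = (_, _)
    simp [ExtendingDatum.Mul, Ω.one_act', Ω.one_rho', Ω.f_one_left', Ω.one_mul']
  · intro a
    obtain ⟨h, s⟩ := a
    show (_, _) = (_, _)
    simp [ExtendingDatum.Mul, Ω.act_one', Ω.rho_one', Ω.f_one_right', Ω.mul_one']
  · intro a
    obtain ⟨b, hb⟩ := R.phi_surj (R.phi a)⁻¹
    refine ⟨b, R.phi_inj ?_⟩
    rw [R.phi_mul, hb, inv_mul_cancel, R.phi_one]

end Back

/-- `Ω(H) = ((S, 1_S, ∗), ◁, ▷, f)` is a group extending structure of `H` if and only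
if there exists a group `E` containing `H` as a subgroup and a unitary map `p : E → H`
with `p (h x) = h p x`, such that `S = p⁻¹(1)` and the operations of `Ω` are the ones
defined from `p`. -/
theorem isGroupExtendingStructure_iff_realization
    (Ω : ExtendingDatum H S) :
    IsGroupExtendingStructure Ω ↔ Nonempty (Realization Ω) := by
  exact ⟨fun h => ⟨Ω.realizationOf h⟩, fun ⟨R⟩ => R.isGroupExtendingStructure'⟩
end

section
/- Let H be a group and Ω(H) = ((S, 1_S, ∗), ◁, ▷, f) an extending datum of H in which ◁ is the trivial action, i.e., s ◁ h = s for all s ∈ S, h ∈ H. Then Ω(H) is a group extending structure of H if and only if (S, ∗, 1_S) is a group and (H, (S, ∗), ▷, f) is a crossed system of groups; in this case the unified product H ⋉ S coincides (as a group on the set H × S) with the crossed product H #_▷^f (S, ∗). -/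
universe u v

variable {H : Type u} [Group H] {S : Type v}

/-- Let `Ω(H)` be an extending datum of `H` in which `◁` is the trivial action.
Then `Ω(H)` is a group extending structure of `H` if and only if `(S, ∗, 1_S)` is a
group and `(H, (S, ∗), ▷, f)` is a crossed system of groups (each `h ↦ s ▷ h` is an
automorphism of `H`, and the weak-action and cocycle conditions hold); in this case
the unified product `H ⋉ S` coincides, as a group structure on the set `H × S`, with
the crossed product `H #_▷^f (S, ∗)`. -/
theorem trivial_act_iff_crossed_system (Ω : ExtendingDatum H S)
    (hact : ∀ (s : S) (h : H), Ω.act s h = s) :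
    (IsGroupExtendingStructure Ω ↔
      ((∀ s₁ s₂ s₃ : S, Ω.mul (Ω.mul s₁ s₂) s₃ = Ω.mul s₁ (Ω.mul s₂ s₃)) ∧
       (∀ s : S, ∃ s' : S, Ω.mul s' s = Ω.one) ∧
       (∀ s : S, Function.Bijective (Ω.rho s)) ∧
       (∀ (s : S) (h₁ h₂ : H), Ω.rho s (h₁ * h₂) = Ω.rho s h₁ * Ω.rho s h₂) ∧
       (∀ (s₁ s₂ : S) (h : H),
          Ω.rho s₁ (Ω.rho s₂ h)
            = Ω.f s₁ s₂ * Ω.rho (Ω.mul s₁ s₂) h * (Ω.f s₁ s₂)⁻¹) ∧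
       (∀ s₁ s₂ s₃ : S,
          Ω.f s₁ s₂ * Ω.f (Ω.mul s₁ s₂) s₃
            = Ω.rho s₁ (Ω.f s₂ s₃) * Ω.f s₁ (Ω.mul s₂ s₃)))) ∧
    (∀ x y : H × S,
      Ω.Mul x y = (x.1 * Ω.rho x.2 y.1 * Ω.f x.2 y.2, Ω.mul x.2 y.2)) := by
  have hmul : ∀ x y : H × S,
      Ω.Mul x y = (x.1 * Ω.rho x.2 y.1 * Ω.f x.2 y.2, Ω.mul x.2 y.2) := by
    intro x y
    simp [ExtendingDatum.Mul, hact]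
  refine ⟨?_, hmul⟩
  constructor
  · rintro ⟨hassoc, hl, hr, hinv⟩
    have key : ∀ (h₁ h₂ h₃ : H) (s₁ s₂ s₃ : S),
        (h₁ * Ω.rho s₁ h₂ * Ω.f s₁ s₂ * Ω.rho (Ω.mul s₁ s₂) h₃ * Ω.f (Ω.mul s₁ s₂) s₃
          = h₁ * Ω.rho s₁ (h₂ * Ω.rho s₂ h₃ * Ω.f s₂ s₃) * Ω.f s₁ (Ω.mul s₂ s₃)) ∧
        Ω.mul (Ω.mul s₁ s₂) s₃ = Ω.mul s₁ (Ω.mul s₂ s₃) := by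
      intro h₁ h₂ h₃ s₁ s₂ s₃
      have := hassoc (h₁, s₁) (h₂, s₂) (h₃, s₃)
      rw [hmul, hmul, hmul, hmul, Prod.ext_iff] at this
      exact this
    have Sassoc : ∀ s₁ s₂ s₃ : S, Ω.mul (Ω.mul s₁ s₂) s₃ = Ω.mul s₁ (Ω.mul s₂ s₃) :=
      fun s₁ s₂ s₃ => (key 1 1 1 s₁ s₂ s₃).2
    have Sinv : ∀ s : S, ∃ s' : S, Ω.mul s' s = Ω.one := by
      intro s
      obtain ⟨⟨h', s'⟩, hb⟩ := hinv (1, s)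
      rw [hmul, Prod.ext_iff] at hb
      exact ⟨s', hb.2⟩
    have rhomul : ∀ (s : S) (h₁ h₂ : H), Ω.rho s (h₁ * h₂) = Ω.rho s h₁ * Ω.rho s h₂ := by
      intro s h₁ h₂
      have := (key 1 h₁ h₂ s Ω.one Ω.one).1
      simpa [Ω.f_one_right', Ω.f_one_left', Ω.mul_one', Ω.one_rho'] using this.symm
    have weak' : ∀ (s₁ s₂ : S) (h : H),
        Ω.f s₁ s₂ * Ω.rho (Ω.mul s₁ s₂) h = Ω.rho s₁ (Ω.rho s₂ h) * Ω.f s₁ s₂ := by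
      intro s₁ s₂ h
      have := (key 1 1 h s₁ s₂ Ω.one).1
      simpa [Ω.f_one_right', Ω.f_one_left', Ω.mul_one', Ω.rho_one'] using this
    have weak : ∀ (s₁ s₂ : S) (h : H),
        Ω.rho s₁ (Ω.rho s₂ h) = Ω.f s₁ s₂ * Ω.rho (Ω.mul s₁ s₂) h * (Ω.f s₁ s₂)⁻¹ := by
      intro s₁ s₂ h
      rw [eq_mul_inv_iff_mul_eq]
      exact (weak' s₁ s₂ h).symm
    have cocycle : ∀ s₁ s₂ s₃ : S,
        Ω.f s₁ s₂ * Ω.f (Ω.mul s₁ s₂) s₃ = Ω.rho s₁ (Ω.f s₂ s₃) * Ω.f s₁ (Ω.mul s₂ s₃) := by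
      intro s₁ s₂ s₃
      have := (key 1 1 1 s₁ s₂ s₃).1
      simpa [Ω.rho_one'] using this
    -- S is a group: right inverses
    have Srinv : ∀ s : S, ∃ t : S, Ω.mul s t = Ω.one := by
      intro s
      obtain ⟨s', hs'⟩ := Sinv s
      obtain ⟨s'', hs''⟩ := Sinv s'
      have hss : s = s'' := by
        calc s = Ω.mul Ω.one s := (Ω.one_mul' s).symm
        _ = Ω.mul (Ω.mul s'' s') s := by rw [hs'']
        _ = Ω.mul s'' (Ω.mul s' s) := Sassoc _ _ _
        _ = s'' := by rw [hs', Ω.mul_one']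
      exact ⟨s', hss ▸ hs''⟩
    have hbij : ∀ s : S, Function.Bijective (Ω.rho s) := by
      intro s
      constructor
      · obtain ⟨s', hs'⟩ := Sinv s
        intro a b hab
        have h := congrArg (Ω.rho s') hab
        rw [weak, weak, hs', Ω.one_rho', Ω.one_rho'] at h
        exact mul_left_cancel (mul_right_cancel h)
      · obtain ⟨t, ht⟩ := Srinv s
        intro g
        refine ⟨Ω.rho t ((Ω.f s t)⁻¹ * g * Ω.f s t), ?_⟩
        rw [weak, ht, Ω.one_rho']
        group
    exact ⟨Sassoc, Sinv, hbij, rhomul, weak, cocycle⟩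
  · rintro ⟨Sassoc, Sinv, hbij, rhomul, weak, cocycle⟩
    refine ⟨?_, ?_, ?_, ?_⟩
    · rintro ⟨h₁, s₁⟩ ⟨h₂, s₂⟩ ⟨h₃, s₃⟩
      rw [hmul, hmul, hmul, hmul, Prod.ext_iff]
      refine ⟨?_, Sassoc s₁ s₂ s₃⟩
      simp only [rhomul, weak, ← mul_assoc]
      rw [mul_assoc _ (Ω.rho s₁ (Ω.f s₂ s₃)) _, ← cocycle]
      group
    · rintro ⟨h, s⟩
      rw [hmul]
      simp [Ω.one_rho', Ω.f_one_left', Ω.one_mul']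
    · rintro ⟨h, s⟩
      rw [hmul]
      simp [Ω.rho_one', Ω.f_one_right', Ω.mul_one']
    · rintro ⟨h, s⟩
      obtain ⟨s', hs'⟩ := Sinv s
      refine ⟨((Ω.rho s' h * Ω.f s' s)⁻¹, s'), ?_⟩
      rw [hmul]
      simp [hs']
end

section
/- Let H be a group and Ω(H) = ((S, 1_S, ∗), ◁, ▷, f) an extending datum of H in which f is the trivial cocycle, i.e., f(s₁, s₂) = 1_H for all s₁, s₂ ∈ S. Then Ω(H) is a group extending structure of H if and only if (S, ∗, 1_S) is a group and (H, (S, ∗), ▷, ◁) is a matched pair of groups; in this case the unified product H ⋉ S coincides (as a group on the set H × S) with the bicrossed product H ⋈ (S, ∗). -/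
universe u v

variable {H : Type u} [Group H] {S : Type v}

/-- Let `Ω(H)` be an extending datum of `H` in which `f` is the trivial cocycle.
Then `Ω(H)` is a group extending structure of `H` if and only if `(S, ∗, 1_S)` is a
group and `(H, (S, ∗), ▷, ◁)` is a matched pair of groups (`▷` is a left action of
the group `(S, ∗)` on the set `H`, `◁` is a right action of the group `H` on the set
`S`, and the two matched-pair compatibility conditions hold); in this case the unified
product `H ⋉ S` coincides, as a group structure on the set `H × S`, with the
bicrossed product `H ⋈ (S, ∗)`. -/
theorem trivial_cocycle_iff_matched_pair (Ω : ExtendingDatum H S)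
    (hf : ∀ s₁ s₂ : S, Ω.f s₁ s₂ = 1) :
    (IsGroupExtendingStructure Ω ↔
      ((∀ s₁ s₂ s₃ : S, Ω.mul (Ω.mul s₁ s₂) s₃ = Ω.mul s₁ (Ω.mul s₂ s₃)) ∧
       (∀ s : S, ∃ s' : S, Ω.mul s' s = Ω.one) ∧
       (∀ (s₁ s₂ : S) (h : H),
          Ω.rho (Ω.mul s₁ s₂) h = Ω.rho s₁ (Ω.rho s₂ h)) ∧
       (∀ (s : S) (h₁ h₂ : H), Ω.act s (h₁ * h₂) = Ω.act (Ω.act s h₁) h₂) ∧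
       (∀ (s : S) (h₁ h₂ : H),
          Ω.rho s (h₁ * h₂) = Ω.rho s h₁ * Ω.rho (Ω.act s h₁) h₂) ∧
       (∀ (s₁ s₂ : S) (h : H),
          Ω.act (Ω.mul s₁ s₂) h
            = Ω.mul (Ω.act s₁ (Ω.rho s₂ h)) (Ω.act s₂ h)))) ∧
    (∀ x y : H × S,
      Ω.Mul x y = (x.1 * Ω.rho x.2 y.1, Ω.mul (Ω.act x.2 y.1) y.2)) := by

  have hm : ∀ x y : H × S,
      Ω.Mul x y = (x.1 * Ω.rho x.2 y.1, Ω.mul (Ω.act x.2 y.1) y.2) := by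
    intro x y
    simp [ExtendingDatum.Mul, hf]
  refine ⟨⟨?_, ?_⟩, hm⟩
  · rintro ⟨hassoc, h1, h2, hinv⟩
    refine ⟨?_, ?_, ?_, ?_, ?_, ?_⟩
    · intro s₁ s₂ s₃
      have := hassoc (1, s₁) (1, s₂) (1, s₃)
      simpa [hm, Ω.rho_one', Ω.act_one', Prod.ext_iff] using this
    · intro s
      obtain ⟨⟨h', s'⟩, hb⟩ := hinv (1, s)
      refine ⟨s', ?_⟩
      have := congrArg Prod.snd hb
      simpa [hm, Ω.act_one'] using this
    · intro s₁ s₂ h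
      have := hassoc (1, s₁) (1, s₂) (h, Ω.one)
      simp [hm, Ω.rho_one', Ω.act_one', Ω.mul_one', Prod.ext_iff] at this
      exact this.1
    · intro s h₁ h₂
      have := hassoc (1, s) (h₁, Ω.one) (h₂, Ω.one)
      simp [hm, Ω.one_rho', Ω.one_act', Ω.mul_one', Ω.one_mul', Prod.ext_iff] at this
      exact this.2.symm
    · intro s h₁ h₂
      have := hassoc (1, s) (h₁, Ω.one) (h₂, Ω.one)
      simp [hm, Ω.one_rho', Ω.one_act', Ω.mul_one', Ω.one_mul', Prod.ext_iff] at this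
      exact this.1.symm
    · intro s₁ s₂ h
      have := hassoc (1, s₁) (1, s₂) (h, Ω.one)
      simp [hm, Ω.rho_one', Ω.act_one', Ω.mul_one', Prod.ext_iff] at this
      exact this.2
  · rintro ⟨hS, hSinv, hρmul, hactmul, hρh, hactS⟩
    refine ⟨?_, ?_, ?_, ?_⟩
    · rintro ⟨h₁, s₁⟩ ⟨h₂, s₂⟩ ⟨h₃, s₃⟩
      simp only [hm, Prod.mk.injEq]
      constructor
      · rw [hρh s₁ h₂ (Ω.rho s₂ h₃), hρmul, mul_assoc]
      · rw [hactmul s₁ h₂ (Ω.rho s₂ h₃), hactS, hS]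
    · rintro ⟨h, s⟩
      simp [hm, Ω.one_rho', Ω.one_act', Ω.one_mul']
    · rintro ⟨h, s⟩
      simp [hm, Ω.rho_one', Ω.act_one', Ω.mul_one']
    · rintro ⟨h, s⟩
      obtain ⟨t, ht⟩ := hSinv s
      refine ⟨((Ω.rho (Ω.act t h⁻¹) h)⁻¹, Ω.act t h⁻¹), ?_⟩
      have hact : Ω.act (Ω.act t h⁻¹) h = t := by
        rw [← hactmul, inv_mul_cancel, Ω.act_one']
      simp [hm, hact, ht]
end

section
/- Let H be a group and Ω(H) = ((S, 1_S, ∗), ◁, ▷, f) an extending datum of H in which ▷ is the trivial action, i.e., s ▷ h = h for all s ∈ S, h ∈ H. Then Ω(H) is a group extending structure of H if and only if ◁ is a right action of the group H on the set S, every s ∈ S admits s' ∈ S with s' ∗ s = 1_S, and the following hold for all s₁, s₂, s₃ ∈ S and h ∈ H: (s₁ ∗ s₂) ∗ s₃ = (s₁ ◁ f(s₂, s₃)) ∗ (s₂ ∗ s₃); f(s₁ ◁ h, s₂ ◁ h) = h⁻¹ f(s₁, s₂) h; (s₁ ∗ s₂) ◁ h = (s₁ ◁ h) ∗ (s₂ ◁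 h); f(s₁, s₂) f(s₁ ∗ s₂, s₃) = f(s₂, s₃) f(s₁ ◁ f(s₂, s₃), s₂ ∗ s₃). In this case the multiplication of the unified product takes the form (h₁, s₁) · (h₂, s₂) = (h₁ h₂ f(s₁ ◁ h₂, s₂), (s₁ ◁ h₂) ∗ s₂) (the twisted product H ×^{f,◁} S). -/
universe u v

variable {H : Type u} [Group H] {S : Type v}

/-- Let `Ω(H)` be an extending datum of `H` in which `▷` is the trivial action.
Then `Ω(H)` is a group extending structure of `H` if and only if `◁` is a right
action of the group `H` on the set `S`, every `s ∈ S` admits `s' ∈ S` with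
`s' ∗ s = 1_S`, and the four listed compatibility conditions hold. In this case the
multiplication of the unified product takes the form
`(h₁, s₁) · (h₂, s₂) = (h₁ h₂ f(s₁ ◁ h₂, s₂), (s₁ ◁ h₂) ∗ s₂)`
(the twisted product `H ×^{f,◁} S`). -/
theorem trivial_rho_iff_twisted_product (Ω : ExtendingDatum H S)
    (hrho : ∀ (s : S) (h : H), Ω.rho s h = h) :
    (IsGroupExtendingStructure Ω ↔
      ((∀ (s : S) (h₁ h₂ : H), Ω.act s (h₁ * h₂) = Ω.act (Ω.act s h₁) h₂) ∧
       (∀ s : S, ∃ s' : S, Ω.mul s' s = Ω.one) ∧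
       (∀ s₁ s₂ s₃ : S,
          Ω.mul (Ω.mul s₁ s₂) s₃ = Ω.mul (Ω.act s₁ (Ω.f s₂ s₃)) (Ω.mul s₂ s₃)) ∧
       (∀ (s₁ s₂ : S) (h : H),
          Ω.f (Ω.act s₁ h) (Ω.act s₂ h) = h⁻¹ * Ω.f s₁ s₂ * h) ∧
       (∀ (s₁ s₂ : S) (h : H),
          Ω.act (Ω.mul s₁ s₂) h = Ω.mul (Ω.act s₁ h) (Ω.act s₂ h)) ∧
       (∀ s₁ s₂ s₃ : S,
          Ω.f s₁ s₂ * Ω.f (Ω.mul s₁ s₂) s₃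
            = Ω.f s₂ s₃ * Ω.f (Ω.act s₁ (Ω.f s₂ s₃)) (Ω.mul s₂ s₃)))) ∧
    (∀ x y : H × S,
      Ω.Mul x y = (x.1 * y.1 * Ω.f (Ω.act x.2 y.1) y.2, Ω.mul (Ω.act x.2 y.1) y.2)) := by
  constructor
  · constructor
    · rintro ⟨hassoc, hlu, hru, hinv⟩
      refine ⟨?_, ?_, ?_, ?_, ?_, ?_⟩
      · intro s h₁ h₂
        have := hassoc ((1 : H), s) (h₁, Ω.one) (h₂, Ω.one)
        have h2 := congrArg Prod.snd this
        simp only [ExtendingDatum.Mul, hrho, Ω.mul_one', Ω.one_mul', Ω.act_one',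
          Ω.one_act', Ω.f_one_right', Ω.f_one_left', mul_one, one_mul] at h2
        exact h2.symm
      · intro s
        obtain ⟨⟨k, t⟩, hb⟩ := hinv ((1 : H), s)
        have h2 := congrArg Prod.snd hb
        simp only [ExtendingDatum.Mul, hrho, Ω.act_one'] at h2
        exact ⟨t, h2⟩
      · intro s₁ s₂ s₃
        have := hassoc ((1 : H), s₁) ((1 : H), s₂) ((1 : H), s₃)
        have h2 := congrArg Prod.snd this
        simp only [ExtendingDatum.Mul, hrho, Ω.act_one', one_mul, mul_one] at h2
        exact h2
      · intro s₁ s₂ h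
        have := hassoc ((1 : H), s₁) ((1 : H), s₂) (h, Ω.one)
        have h1 := congrArg Prod.fst this
        simp only [ExtendingDatum.Mul, hrho, Ω.act_one', Ω.mul_one', Ω.f_one_right',
          one_mul, mul_one] at h1
        rw [mul_assoc, eq_inv_mul_iff_mul_eq]
        exact h1.symm
      · intro s₁ s₂ h
        have := hassoc ((1 : H), s₁) ((1 : H), s₂) (h, Ω.one)
        have h2 := congrArg Prod.snd this
        simp only [ExtendingDatum.Mul, hrho, Ω.act_one', Ω.mul_one', Ω.f_one_right',
          one_mul, mul_one] at h2
        exact h2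
      · intro s₁ s₂ s₃
        have := hassoc ((1 : H), s₁) ((1 : H), s₂) ((1 : H), s₃)
        have h1 := congrArg Prod.fst this
        simp only [ExtendingDatum.Mul, hrho, Ω.act_one', one_mul, mul_one] at h1
        exact h1
    · rintro ⟨ha, hi, hc, hd, he, hf6⟩
      refine ⟨?_, ?_, ?_, ?_⟩
      · rintro ⟨h₁, s₁⟩ ⟨h₂, s₂⟩ ⟨h₃, s₃⟩
        simp only [ExtendingDatum.Mul, hrho]
        have hact : Ω.act s₁ (h₂ * h₃ * Ω.f (Ω.act s₂ h₃) s₃)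
            = Ω.act (Ω.act (Ω.act s₁ h₂) h₃) (Ω.f (Ω.act s₂ h₃) s₃) := by
          rw [ha, ha]
        simp only [Prod.mk.injEq]
        rw [he, hc, hact]
        set B := Ω.act s₂ h₃ with hB
        set X := Ω.act (Ω.act s₁ h₂) h₃ with hX
        set F := Ω.f B s₃ with hF
        refine ⟨?_, rfl⟩
        have key : Ω.f (Ω.act s₁ h₂) s₂ * h₃ = h₃ * Ω.f X B := by
          rw [hX, hB, hd]; group
        have h6 : Ω.f X B * Ω.f (Ω.mul X B) s₃ = F * Ω.f (Ω.act X F) (Ω.mul B s₃) := by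
          rw [hF]; exact hf6 X B s₃
        calc h₁ * h₂ * Ω.f (Ω.act s₁ h₂) s₂ * h₃ * Ω.f (Ω.mul X B) s₃
            = h₁ * h₂ * (Ω.f (Ω.act s₁ h₂) s₂ * h₃) * Ω.f (Ω.mul X B) s₃ := by group
          _ = h₁ * h₂ * (h₃ * Ω.f X B) * Ω.f (Ω.mul X B) s₃ := by rw [key]
          _ = h₁ * h₂ * h₃ * (Ω.f X B * Ω.f (Ω.mul X B) s₃) := by group
          _ = h₁ * h₂ * h₃ * (F * Ω.f (Ω.act X F) (Ω.mul B s₃)) := by rw [h6]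
          _ = h₁ * (h₂ * h₃ * F) * Ω.f (Ω.act X F) (Ω.mul B s₃) := by group
      · rintro ⟨h, s⟩
        simp only [ExtendingDatum.Mul, hrho, Ω.one_act', Ω.one_mul', Ω.f_one_left',
          one_mul, mul_one]
      · rintro ⟨h, s⟩
        simp only [ExtendingDatum.Mul, hrho, Ω.act_one', Ω.mul_one', Ω.f_one_right',
          one_mul, mul_one]
      · rintro ⟨h, s⟩
        obtain ⟨s', hs'⟩ := hi s
        refine ⟨((Ω.f s' s)⁻¹ * h⁻¹, Ω.act s' h⁻¹), ?_⟩
        simp only [ExtendingDatum.Mul, hrho]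
        have : Ω.act (Ω.act s' h⁻¹) h = s' := by
          rw [← ha, inv_mul_cancel, Ω.act_one']
        rw [this, hs']
        simp only [Prod.mk.injEq]
        exact ⟨by group, trivial⟩
  · intro x y
    simp only [ExtendingDatum.Mul, hrho]
end

section
/- Let H be a group, Ω(H) = ((S, 1_S, ∗), ◁, ▷, f) a group extending structure of H, and H ⋉ S the unified product. Let G be a group, u : H → G a morphism of groups and v : S → G a map such that v(s₁) v(s₂) = u(f(s₁, s₂)) v(s₁ ∗ s₂) and v(s) u(h) = u(s ▷ h) v(s ◁ h) for all s, s₁, s₂ ∈ S, h ∈ H. Then there exists a unique morphism of groups φ : H ⋉ S → G such that φ(h, 1_S) = u(h) and φ(1_H, s) = v(s) for all h ∈ H, s ∈ S; explicitly φ(h, s) = u(h) v(s). -/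
universe u v

variable {H : Type u} [Group H] {S : Type v}

/-- **Universal property (initial object).** Let `Ω(H)` be a group extending
structure of `H` with unified product `H ⋉ S`, `G` a group, `u : H → G` a morphism
of groups and `v : S → G` a map satisfying
`v(s₁) v(s₂) = u(f(s₁, s₂)) v(s₁ ∗ s₂)` and `v(s) u(h) = u(s ▷ h) v(s ◁ h)`.
Then there exists a unique morphism of groups `φ : H ⋉ S → G` with
`φ (h, 1_S) = u h` and `φ (1_H, s) = v s`, namely `φ (h, s) = u h * v s`. -/
theorem unified_product_initial (Ω : ExtendingDatum H S)
    (hΩ : IsGroupExtendingStructure Ω)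
    {G : Type*} [Group G] (u : H →* G) (v : S → G)
    (huv1 : ∀ s₁ s₂ : S, v s₁ * v s₂ = u (Ω.f s₁ s₂) * v (Ω.mul s₁ s₂))
    (huv2 : ∀ (s : S) (h : H), v s * u h = u (Ω.rho s h) * v (Ω.act s h)) :
    (∀ a b : H × S,
      u (Ω.Mul a b).1 * v (Ω.Mul a b).2 = (u a.1 * v a.2) * (u b.1 * v b.2)) ∧
    (∀ h : H, u h * v Ω.one = u h) ∧
    (∀ s : S, u 1 * v s = v s) ∧
    (∀ φ : H × S → G,
      (∀ a b : H × S, φ (Ω.Mul a b) = φ a * φ b) →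
      (∀ h : H, φ (h, Ω.one) = u h) →
      (∀ s : S, φ ((1 : H), s) = v s) →
      ∀ x : H × S, φ x = u x.1 * v x.2) := by
  have hvone : v Ω.one = 1 := by
    have h := huv1 Ω.one Ω.one
    rw [Ω.f_one_right', Ω.mul_one', map_one, one_mul] at h
    exact mul_left_cancel (a := v Ω.one) (by rw [h, mul_one])
  refine ⟨?_, ?_, ?_, ?_⟩
  · intro a b
    simp only [ExtendingDatum.Mul, map_mul]
    rw [mul_assoc, mul_assoc, ← huv1, ← mul_assoc, mul_assoc (u a.1), ← mul_assoc (u (Ω.rho a.2 b.1)), ← huv2]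
    simp [mul_assoc]
  · intro h; rw [hvone, mul_one]
  · intro s; rw [map_one, one_mul]
  · intro φ hmul hu hv x
    have key : Ω.Mul (x.1, Ω.one) ((1 : H), x.2) = x := by
      simp only [ExtendingDatum.Mul, Ω.rho_one', Ω.act_one', Ω.f_one_left',
        Ω.one_mul', mul_one]
    calc φ x = φ (Ω.Mul (x.1, Ω.one) ((1 : H), x.2)) := by rw [key]
      _ = u x.1 * v x.2 := by rw [hmul, hu, hv]
end

section
/- Let H be a group and let Ω(H) = ((S, 1_S, ∗), ◁, ▷, f) and Ω'(H) = ((S', 1_{S'}, ∗'), ◁', ▷', f') be two group extending structures of H, with unified products H ⋉ S and H ⋉' S'. Then a map ψ : H ⋉ S → H ⋉' S' is a morphism of groups satisfying ψ(h, 1_S) = (h, 1_{S'}) for all h ∈ H if and only if ψ(h, s) = (h r(s), v(s)) for unitary maps r : S → H (r(1_S) = 1_H) and v : S → S' (v(1_S) = 1_{S'}) satisfying, for all s, s₁, s₂ ∈ S and h ∈ H: v(s ◁ h) = v(s) ◁' h; (s ▷ h) r(s ◁ h) = r(s) (v(s) ▷' h); v(s₁ ∗ s₂) = (v(s₁) ◁'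 r(s₂)) ∗' v(s₂); f(s₁, s₂) r(s₁ ∗ s₂) = r(s₁) (v(s₁) ▷' r(s₂)) f'(v(s₁) ◁' r(s₂), v(s₂)). Moreover, the pair (r, v) is uniquely determined by ψ. -/
universe u v

variable {H : Type u} [Group H] {S : Type v}

/-- From associativity of the unified product multiplication, the action and `rho`
are compatible with products in `H`. -/
lemma ExtendingDatum.act_rho_mul (Ω : ExtendingDatum H S)
    (assoc : ∀ a b c : H × S, Ω.Mul (Ω.Mul a b) c = Ω.Mul a (Ω.Mul b c))
    (x : S) (a b : H) :
    Ω.act x (a * b) = Ω.act (Ω.act x a) b ∧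
    Ω.rho x (a * b) = Ω.rho x a * Ω.rho (Ω.act x a) b := by
  have h := assoc ((1 : H), x) (a, Ω.one) (b, Ω.one)
  simp only [ExtendingDatum.Mul, Ω.f_one_right', Ω.mul_one', Ω.one_act', Ω.one_rho',
    Ω.f_one_left', mul_one, one_mul, Prod.mk.injEq] at h
  exact ⟨h.2.symm, h.1.symm⟩

universe w

/-- **(Theorem 3.1, classification of morphisms).** Let `Ω(H)` and `Ω'(H)` be two group
extending structures of `H` on pointed sets `(S, 1_S)` and `(S', 1_{S'})`. A map
`ψ : H ⋉ S → H ⋉' S'` is a morphism of groups with `ψ (h, 1_S) = (h, 1_{S'})` for all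
`h ∈ H` if and only if `ψ (h, s) = (h r(s), v(s))` for unitary maps `r : S → H`,
`v : S → S'` satisfying the compatibility conditions (p1)–(p4). Moreover, the pair
`(r, v)` is uniquely determined by `ψ`. -/
theorem morphisms_of_unified_products {S' : Type w}
    (Ω : ExtendingDatum H S) (Ω' : ExtendingDatum H S')
    (hΩ : IsGroupExtendingStructure Ω) (hΩ' : IsGroupExtendingStructure Ω')
    (ψ : H × S → H × S') :
    (((∀ a b : H × S, ψ (Ω.Mul a b) = Ω'.Mul (ψ a) (ψ b)) ∧
        (∀ h : H, ψ (h, Ω.one) = (h, Ω'.one))) ↔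
      ∃ (r : S → H) (v : S → S'),
        r Ω.one = 1 ∧ v Ω.one = Ω'.one ∧
        (∀ (s : S) (h : H), v (Ω.act s h) = Ω'.act (v s) h) ∧
        (∀ (s : S) (h : H),
          Ω.rho s h * r (Ω.act s h) = r s * Ω'.rho (v s) h) ∧
        (∀ s₁ s₂ : S,
          v (Ω.mul s₁ s₂) = Ω'.mul (Ω'.act (v s₁) (r s₂)) (v s₂)) ∧
        (∀ s₁ s₂ : S,
          Ω.f s₁ s₂ * r (Ω.mul s₁ s₂)
            = r s₁ * Ω'.rho (v s₁) (r s₂) * Ω'.f (Ω'.act (v s₁) (r s₂)) (v s₂)) ∧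
        (∀ (h : H) (s : S), ψ (h, s) = (h * r s, v s))) ∧
    (∀ (r₁ r₂ : S → H) (v₁ v₂ : S → S'),
      (∀ (h : H) (s : S), ψ (h, s) = (h * r₁ s, v₁ s)) →
      (∀ (h : H) (s : S), ψ (h, s) = (h * r₂ s, v₂ s)) →
      r₁ = r₂ ∧ v₁ = v₂) := by
  obtain ⟨assoc', -, -, -⟩ := hΩ'
  constructor
  · constructor
    · rintro ⟨hmul, hone⟩
      refine ⟨fun s => (ψ (1, s)).1, fun s => (ψ (1, s)).2, ?_, ?_, ?_, ?_, ?_, ?_, ?_⟩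
      all_goals
        try skip
      · show (ψ (1, Ω.one)).1 = 1
        rw [hone 1]
      · show (ψ (1, Ω.one)).2 = Ω'.one
        rw [hone 1]
      -- first establish the product formula `ψ (h, s) = (h * r s, v s)`
      all_goals
        have key : ∀ (h : H) (s : S), ψ (h, s) = (h * (ψ (1, s)).1, (ψ (1, s)).2) := by
          intro h s
          have e1 : Ω.Mul (h, Ω.one) (1, s) = (h, s) := by
            simp [ExtendingDatum.Mul, Ω.one_act', Ω.one_rho', Ω.f_one_left', Ω.one_mul',
              Ω.rho_one']
          have := hmul (h, Ω.one) (1, s)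
          rw [e1, hone h] at this
          rw [this]
          simp [ExtendingDatum.Mul, Ω'.one_act', Ω'.one_rho', Ω'.f_one_left', Ω'.one_mul']
      · -- (p1): v (s ◁ h) = v s ◁' h
        intro s h
        have e1 : Ω.Mul (1, s) (h, Ω.one) = (Ω.rho s h, Ω.act s h) := by
          simp [ExtendingDatum.Mul, Ω.f_one_right', Ω.mul_one']
        have := hmul (1, s) (h, Ω.one)
        rw [e1, hone h, key (Ω.rho s h) (Ω.act s h)] at this
        have h2 := congrArg Prod.snd this
        simpa [ExtendingDatum.Mul, Ω'.f_one_right', Ω'.mul_one'] using h2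
      · -- (p2)
        intro s h
        have e1 : Ω.Mul (1, s) (h, Ω.one) = (Ω.rho s h, Ω.act s h) := by
          simp [ExtendingDatum.Mul, Ω.f_one_right', Ω.mul_one']
        have := hmul (1, s) (h, Ω.one)
        rw [e1, hone h, key (Ω.rho s h) (Ω.act s h)] at this
        have h1 := congrArg Prod.fst this
        simpa [ExtendingDatum.Mul, Ω'.f_one_right', Ω'.mul_one'] using h1
      · -- (p3)
        intro s₁ s₂
        have e1 : Ω.Mul (1, s₁) (1, s₂) = (Ω.f s₁ s₂, Ω.mul s₁ s₂) := by
          simp [ExtendingDatum.Mul, Ω.rho_one', Ω.act_one']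
        have := hmul (1, s₁) (1, s₂)
        rw [e1, key (Ω.f s₁ s₂) (Ω.mul s₁ s₂), key 1 s₂] at this
        have h2 := congrArg Prod.snd this
        simpa [ExtendingDatum.Mul] using h2
      · -- (p4)
        intro s₁ s₂
        have e1 : Ω.Mul (1, s₁) (1, s₂) = (Ω.f s₁ s₂, Ω.mul s₁ s₂) := by
          simp [ExtendingDatum.Mul, Ω.rho_one', Ω.act_one']
        have := hmul (1, s₁) (1, s₂)
        rw [e1, key (Ω.f s₁ s₂) (Ω.mul s₁ s₂), key 1 s₂] at this
        have h1 := congrArg Prod.fst this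
        simpa [ExtendingDatum.Mul, mul_assoc] using h1
      · exact key
    · rintro ⟨r, v, hr1, hv1, p1, p2, p3, p4, hψ⟩
      constructor
      · rintro ⟨h₁, s₁⟩ ⟨h₂, s₂⟩
        have am := fun (x : S') (a b : H) => (Ω'.act_rho_mul assoc' x a b).1
        have rm := fun (x : S') (a b : H) => (Ω'.act_rho_mul assoc' x a b).2
        simp only [ExtendingDatum.Mul, hψ, Prod.mk.injEq]
        refine ⟨?_, ?_⟩
        · rw [mul_assoc, mul_assoc, p4 (Ω.act s₁ h₂) s₂, p1 s₁ h₂]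
          simp only [rm (v s₁) h₂ (r s₂), am (v s₁) h₂ (r s₂), mul_assoc]
          rw [← mul_assoc (Ω.rho s₁ h₂) (r (Ω.act s₁ h₂)), p2 s₁ h₂, mul_assoc]
        · rw [p3 (Ω.act s₁ h₂) s₂, p1 s₁ h₂, ← am (v s₁) h₂ (r s₂)]
      · intro h
        rw [hψ, hr1, hv1, mul_one]
  · intro r₁ r₂ v₁ v₂ h1 h2
    constructor
    · funext s
      have := (h1 1 s).symm.trans (h2 1 s)
      simpa using congrArg Prod.fst this
    · funext s
      have := (h1 1 s).symm.trans (h2 1 s)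
      simpa using congrArg Prod.snd this
end

section
/- Let H be a group, Ω(H) and Ω'(H) two group extending structures of H on pointed sets (S, 1_S) and (S', 1_{S'}), and let ψ : H ⋉ S → H ⋉' S' be a morphism of groups with ψ(h, 1_S) = (h, 1_{S'}) for all h ∈ H, written ψ(h, s) = (h r(s), v(s)) with unitary maps r : S → H, v : S → S'. Then ψ is an isomorphism of groups if and only if the map v : S → S' is bijective. -/
universe u v

variable {H : Type u} [Group H] {S : Type v}

universe w

/-- Let `Ω(H)` and `Ω'(H)` be two group extending structures of `H` on pointed sets
`(S, 1_S)` and `(S', 1_{S'})`, and let `ψ : H ⋉ S → H ⋉' S'` be a morphism of groups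
with `ψ (h, 1_S) = (h, 1_{S'})` for all `h`, written `ψ (h, s) = (h r(s), v(s))` with
unitary maps `r : S → H`, `v : S → S'`. Then `ψ` is an isomorphism of groups if and
only if `v : S → S'` is bijective. -/
theorem unified_product_morphism_bijective_iff {S' : Type w}
    (Ω : ExtendingDatum H S) (Ω' : ExtendingDatum H S')
    (hΩ : IsGroupExtendingStructure Ω) (hΩ' : IsGroupExtendingStructure Ω')
    (r : S → H) (v : S → S') (hr : r Ω.one = 1) (hv : v Ω.one = Ω'.one)
    (ψ : H × S → H × S')
    (hψ : ∀ (h : H) (s : S), ψ (h, s) = (h * r s, v s))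
    (hmul : ∀ a b : H × S, ψ (Ω.Mul a b) = Ω'.Mul (ψ a) (ψ b)) :
    Function.Bijective ψ ↔ Function.Bijective v := by
  constructor
  · rintro ⟨hinj, hsurj⟩
    constructor
    · intro s₁ s₂ h
      have : ψ ((r s₁)⁻¹, s₁) = ψ ((r s₂)⁻¹, s₂) := by
        rw [hψ, hψ, inv_mul_cancel, inv_mul_cancel, h]
      exact (Prod.mk.injEq _ _ _ _).mp (hinj this) |>.2
    · intro s'
      obtain ⟨⟨h, s⟩, hs⟩ := hsurj (1, s')
      rw [hψ] at hs
      exact ⟨s, (Prod.mk.injEq _ _ _ _).mp hs |>.2⟩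
  · rintro ⟨vinj, vsurj⟩
    constructor
    · rintro ⟨h₁, s₁⟩ ⟨h₂, s₂⟩ h
      rw [hψ, hψ] at h
      obtain ⟨h1, h2⟩ := (Prod.mk.injEq _ _ _ _).mp h
      have hs : s₁ = s₂ := vinj h2
      subst hs
      exact Prod.ext (mul_right_cancel h1) rfl
    · rintro ⟨h', s'⟩
      obtain ⟨s, hs⟩ := vsurj s'
      exact ⟨(h' * (r s)⁻¹, s), by rw [hψ, inv_mul_cancel_right, hs]⟩
end

section
/- Let H be a group and let Ω(H) = ((S, 1_S, ∗), ◁, ▷, f) and Ω'(H) = ((S, 1_S, ∗'), ◁', ▷', f') be two group extending structures of H on the same pointed set (S, 1_S), with unified products H ⋉ S and H ⋉' S. Then the following are equivalent: (1) there exists a morphism of groups ψ : H ⋉ S → H ⋉' S with ψ(h, 1_S) = (h, 1_S) for all h ∈ H and π_S ∘ ψ = π_S (where π_S(h, s) = s); (2) ◁ = ◁' and there exists a unitary map r : S → H such that for all s, s₁, s₂ ∈ S and h ∈ H: s ▷ h = r(s) (s ▷' h) r(s ◁ h)⁻¹; s₁ ∗ s₂ = (s₁ ◁ r(s₂)) ∗'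 s₂; f(s₁, s₂) = r(s₁) (s₁ ▷' r(s₂)) f'(s₁ ◁ r(s₂), s₂) r(s₁ ∗ s₂)⁻¹. Furthermore, any such morphism ψ is an isomorphism of groups and is given by ψ(h, s) = (h r(s), s). -/
universe u v

variable {H : Type u} [Group H] {S : Type v}

private lemma aux_rho_act_mul (Ω : ExtendingDatum H S)
    (ha : ∀ a b c : H × S, Ω.Mul (Ω.Mul a b) c = Ω.Mul a (Ω.Mul b c))
    (s : S) (g h : H) :
    Ω.rho s (g * h) = Ω.rho s g * Ω.rho (Ω.act s g) h ∧
    Ω.act s (g * h) = Ω.act (Ω.act s g) h := by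
  have := ha (1, s) (g, Ω.one) (h, Ω.one)
  simp [ExtendingDatum.Mul, Ω.act_one', Ω.one_act', Ω.one_rho', Ω.rho_one',
    Ω.f_one_right', Ω.f_one_left', Ω.mul_one', Ω.one_mul', Prod.ext_iff] at this
  exact ⟨this.1.symm, this.2.symm⟩

/-- Any stabilizing morphism has the form `ψ (h, s) = (h * r s, s)`. -/
private lemma psi_form (Ω Ω' : ExtendingDatum H S) (hone : Ω'.one = Ω.one)
    (ψ : H × S → H × S)
    (hmul : ∀ a b : H × S, ψ (Ω.Mul a b) = Ω'.Mul (ψ a) (ψ b))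
    (hH : ∀ h : H, ψ (h, Ω.one) = (h, Ω.one))
    (hproj : ∀ x : H × S, (ψ x).2 = x.2) :
    ∀ (h : H) (s : S), ψ (h, s) = (h * (ψ (1, s)).1, s) := by
  intro h s
  have e : Ω.Mul (h, Ω.one) (1, s) = (h, s) := by
    simp [ExtendingDatum.Mul, Ω.one_act', Ω.rho_one', Ω.f_one_left', Ω.one_mul']
  have h1 : ψ (1, s) = ((ψ (1, s)).1, s) := Prod.ext rfl (hproj (1, s))
  calc ψ (h, s) = Ω'.Mul (ψ (h, Ω.one)) (ψ (1, s)) := by rw [← e, hmul]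
    _ = Ω'.Mul (h, Ω'.one) ((ψ (1, s)).1, s) := by rw [hH, hone, ← h1]
    _ = (h * (ψ (1, s)).1, s) := by
        simp [ExtendingDatum.Mul, Ω'.one_act', Ω'.one_rho', Ω'.f_one_left',
          Ω'.one_mul']

/-- **(Proposition: Schreier-type classification).** Let `Ω(H)` and `Ω'(H)` be two
group extending structures of `H` on the same pointed set `(S, 1_S)`. There exists a
morphism of groups `ψ : H ⋉ S → H ⋉' S` stabilizing `H` and compatible with the
projections on `S` if and only if `◁ = ◁'` and the operations of `Ω` are implemented
by those of `Ω'` via a unitary map `r : S → H`. Furthermore, any such morphism is an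
isomorphism of groups, given by `ψ (h, s) = (h r(s), s)`. -/
theorem unified_products_stabilizing_morphism_iff
    (Ω Ω' : ExtendingDatum H S) (hone : Ω'.one = Ω.one)
    (hΩ : IsGroupExtendingStructure Ω) (hΩ' : IsGroupExtendingStructure Ω') :
    ((∃ ψ : H × S → H × S,
        (∀ a b : H × S, ψ (Ω.Mul a b) = Ω'.Mul (ψ a) (ψ b)) ∧
        (∀ h : H, ψ (h, Ω.one) = (h, Ω.one)) ∧
        (∀ x : H × S, (ψ x).2 = x.2)) ↔
      (Ω.act = Ω'.act ∧
        ∃ r : S → H, r Ω.one = 1 ∧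
          (∀ (s : S) (h : H),
            Ω.rho s h = r s * Ω'.rho s h * (r (Ω.act s h))⁻¹) ∧
          (∀ s₁ s₂ : S, Ω.mul s₁ s₂ = Ω'.mul (Ω.act s₁ (r s₂)) s₂) ∧
          (∀ s₁ s₂ : S,
            Ω.f s₁ s₂
              = r s₁ * Ω'.rho s₁ (r s₂) * Ω'.f (Ω.act s₁ (r s₂)) s₂ *
                  (r (Ω.mul s₁ s₂))⁻¹))) ∧
    (∀ ψ : H × S → H × S,
      (∀ a b : H × S, ψ (Ω.Mul a b) = Ω'.Mul (ψ a) (ψ b)) →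
      (∀ h : H, ψ (h, Ω.one) = (h, Ω.one)) →
      (∀ x : H × S, (ψ x).2 = x.2) →
      Function.Bijective ψ ∧
        ∃ r : S → H, r Ω.one = 1 ∧ ∀ (h : H) (s : S), ψ (h, s) = (h * r s, s)) := by
  constructor
  · constructor
    · rintro ⟨ψ, hmul, hH, hproj⟩
      set r : S → H := fun s => (ψ (1, s)).1 with hrdef
      have hψ : ∀ (h : H) (s : S), ψ (h, s) = (h * r s, s) :=
        psi_form Ω Ω' hone ψ hmul hH hproj
      have hr1 : r Ω.one = 1 := by
        have := hH 1
        simp [hrdef, this]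
      -- the master equation
      have key : ∀ (h₁ h₂ : H) (s₁ s₂ : S),
          (h₁ * Ω.rho s₁ h₂ * Ω.f (Ω.act s₁ h₂) s₂ * r (Ω.mul (Ω.act s₁ h₂) s₂),
            Ω.mul (Ω.act s₁ h₂) s₂)
          = ((h₁ * r s₁) * Ω'.rho s₁ (h₂ * r s₂) *
              Ω'.f (Ω'.act s₁ (h₂ * r s₂)) s₂,
              Ω'.mul (Ω'.act s₁ (h₂ * r s₂)) s₂) := by
        intro h₁ h₂ s₁ s₂
        have := hmul (h₁, s₁) (h₂, s₂)
        rwa [show Ω.Mul (h₁, s₁) (h₂, s₂)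
            = (h₁ * Ω.rho s₁ h₂ * Ω.f (Ω.act s₁ h₂) s₂, Ω.mul (Ω.act s₁ h₂) s₂)
            from rfl, hψ, hψ, hψ,
          show Ω'.Mul (h₁ * r s₁, s₁) (h₂ * r s₂, s₂)
            = ((h₁ * r s₁) * Ω'.rho s₁ (h₂ * r s₂) *
                Ω'.f (Ω'.act s₁ (h₂ * r s₂)) s₂,
                Ω'.mul (Ω'.act s₁ (h₂ * r s₂)) s₂) from rfl] at this
      have m1' : ∀ s, Ω'.mul s Ω.one = s := by rw [← hone]; exact Ω'.mul_one'
      have fr' : ∀ s, Ω'.f s Ω.one = 1 := by rw [← hone]; exact Ω'.f_one_right'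
      have hact : Ω.act = Ω'.act := by
        funext s h
        have := congrArg Prod.snd (key 1 h s Ω.one)
        simpa [hr1, Ω.mul_one', m1'] using this
      refine ⟨hact, r, hr1, ?_, ?_, ?_⟩
      · intro s h
        have := congrArg Prod.fst (key 1 h s Ω.one)
        simp only [hr1, mul_one, one_mul, Ω.mul_one', fr',
          Ω.f_one_right'] at this
        rw [eq_mul_inv_iff_mul_eq]
        simpa using this
      · intro s₁ s₂
        have := congrArg Prod.snd (key 1 1 s₁ s₂)
        simpa [Ω.act_one', one_mul, hact] using this
      · intro s₁ s₂
        have := congrArg Prod.fst (key 1 1 s₁ s₂)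
        simp only [Ω.act_one', Ω.rho_one', one_mul, mul_one, ← hact] at this
        rw [eq_mul_inv_iff_mul_eq]
        simpa using this
    · rintro ⟨hact, r, hr1, hrho, hmulr, hf⟩
      refine ⟨fun x => (x.1 * r x.2, x.2), ?_, ?_, ?_⟩
      · rintro ⟨h₁, s₁⟩ ⟨h₂, s₂⟩
        have actmul := fun s g h => (aux_rho_act_mul Ω' hΩ'.1 s g h).2
        have rhomul := fun s g h => (aux_rho_act_mul Ω' hΩ'.1 s g h).1
        show (h₁ * Ω.rho s₁ h₂ * Ω.f (Ω.act s₁ h₂) s₂ *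
            r (Ω.mul (Ω.act s₁ h₂) s₂), Ω.mul (Ω.act s₁ h₂) s₂)
          = ((h₁ * r s₁) * Ω'.rho s₁ (h₂ * r s₂) *
              Ω'.f (Ω'.act s₁ (h₂ * r s₂)) s₂,
              Ω'.mul (Ω'.act s₁ (h₂ * r s₂)) s₂)
        have ha : Ω'.act s₁ (h₂ * r s₂) = Ω.act (Ω.act s₁ h₂) (r s₂) := by
          rw [actmul, hact]
        refine Prod.ext ?_ ?_
        · rw [ha, rhomul, ← hact, hrho, hf]
          group
        · rw [ha, hmulr]
      · intro h
        simp [hr1]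
      · intro x
        rfl
  · intro ψ hmul hH hproj
    set r : S → H := fun s => (ψ (1, s)).1 with hrdef
    have hψ : ∀ (h : H) (s : S), ψ (h, s) = (h * r s, s) :=
      psi_form Ω Ω' hone ψ hmul hH hproj
    have hr1 : r Ω.one = 1 := by
      have := hH 1
      simp [hrdef, this]
    refine ⟨?_, r, hr1, hψ⟩
    rw [Function.bijective_iff_has_inverse]
    refine ⟨fun x => (x.1 * (r x.2)⁻¹, x.2), ?_, ?_⟩
    · rintro ⟨h, s⟩
      simp [hψ]
    · rintro ⟨h, s⟩
      simp [hψ]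
end

section
/- Let H be a group, Ω(H) = ((S, 1_S, ∗), ◁, ▷, f) a group extending structure of H, and (H, G, ▷', f') a normalized crossed system of groups. Then the following are equivalent: (1) there exists an isomorphism of groups ψ : H ⋉ S → H #_{▷'}^{f'} G with ψ(h, 1_S) = (h, 1_G) for all h ∈ H; (2) the action ◁ of Ω(H) is trivial (s ◁ h = s for all s, h, so that (S, ∗) is a group and (H, (S, ∗), ▷, f) is a crossed system of groups), and there exist a unitary map r : S → H and an isomorphism of groups v : (S, ∗) → G such that s ▷ h = r(s) (v(s) ▷' h) r(s)⁻¹ and f(s₁, s₂) = r(s₁) (v(s₁) ▷' r(s₂)) f'(v(s₁), v(s₂)) r(s₁ ∗ s₂)⁻¹ for all s, s₁, s₂ ∈ S and h ∈ H. -/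
universe u v

variable {H : Type u} [Group H] {S : Type v}

/-- **(Corollary: when a unified product is a crossed product, stabilizing `H`).**
Let `Ω(H)` be a group extending structure of `H` and `(H, G, ▷', f')` a normalized
crossed system of groups, with crossed product `H #_{▷'}^{f'} G` (multiplication
`(h₁, g₁)(h₂, g₂) = (h₁ (g₁ ▷' h₂) f'(g₁, g₂), g₁ g₂)` on `H × G`). Then there exists
an isomorphism of groups `ψ : H ⋉ S → H #_{▷'}^{f'} G` with `ψ (h, 1_S) = (h, 1_G)`
if and only if the action `◁` of `Ω(H)` is trivial and there exist a unitary map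
`r : S → H` and an isomorphism of groups `v : (S, ∗) → G` with
`s ▷ h = r(s) (v(s) ▷' h) r(s)⁻¹` and
`f(s₁, s₂) = r(s₁) (v(s₁) ▷' r(s₂)) f'(v(s₁), v(s₂)) r(s₁ ∗ s₂)⁻¹`. -/
theorem unified_product_iso_crossed_product_iff
    (Ω : ExtendingDatum H S) (hΩ : IsGroupExtendingStructure Ω)
    {G : Type*} [Group G] (rho' : G → H → H) (f' : G → G → H)
    (haut : ∀ g : G, Function.Bijective (rho' g))
    (hmul : ∀ (g : G) (h₁ h₂ : H), rho' g (h₁ * h₂) = rho' g h₁ * rho' g h₂)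
    (hWA : ∀ (g₁ g₂ : G) (h : H),
      rho' g₁ (rho' g₂ h) = f' g₁ g₂ * rho' (g₁ * g₂) h * (f' g₁ g₂)⁻¹)
    (hCC : ∀ g₁ g₂ g₃ : G,
      f' g₁ g₂ * f' (g₁ * g₂) g₃ = rho' g₁ (f' g₂ g₃) * f' g₁ (g₂ * g₃))
    (hn1 : ∀ g : G, f' g 1 = 1) (hn2 : ∀ g : G, f' 1 g = 1)
    (hn3 : ∀ h : H, rho' 1 h = h) (hn4 : ∀ g : G, rho' g 1 = 1) :
    (∃ ψ : H × S → H × G,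
        Function.Bijective ψ ∧
        (∀ a b : H × S,
          ψ (Ω.Mul a b)
            = ((ψ a).1 * rho' (ψ a).2 (ψ b).1 * f' (ψ a).2 (ψ b).2,
               (ψ a).2 * (ψ b).2)) ∧
        (∀ h : H, ψ (h, Ω.one) = (h, 1))) ↔
      ((∀ (s : S) (h : H), Ω.act s h = s) ∧
        ∃ (r : S → H) (v : S → G),
          r Ω.one = 1 ∧
          Function.Bijective v ∧
          (∀ s₁ s₂ : S, v (Ω.mul s₁ s₂) = v s₁ * v s₂) ∧
          (∀ (s : S) (h : H), Ω.rho s h = r s * rho' (v s) h * (r s)⁻¹) ∧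
          (∀ s₁ s₂ : S,
            Ω.f s₁ s₂
              = r s₁ * rho' (v s₁) (r s₂) * f' (v s₁) (v s₂) *
                  (r (Ω.mul s₁ s₂))⁻¹)) := by
  constructor
  · rintro ⟨ψ, hbij, hm, h1⟩
    set r : S → H := fun s => (ψ (1, s)).1 with hrdef
    set v : S → G := fun s => (ψ (1, s)).2 with hvdef
    have hψ : ∀ (h : H) (s : S), ψ (h, s) = (h * r s, v s) := by
      intro h s
      have hM : Ω.Mul (h, Ω.one) (1, s) = (h, s) := by
        simp [ExtendingDatum.Mul, Ω.one_act', Ω.one_rho', Ω.f_one_left', Ω.one_mul']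
      have key := hm (h, Ω.one) (1, s)
      rw [hM, h1] at key
      simpa [hn2, hn3] using key
    have hr1 : r Ω.one = 1 := by
      have := h1 1
      rw [hψ 1 Ω.one] at this
      simpa using congrArg Prod.fst this
    have hvinj : Function.Injective v := by
      intro a b hab
      have : ψ ((r a)⁻¹, a) = ψ ((r b)⁻¹, b) := by
        rw [hψ, hψ, hab]
        simp
      exact congrArg Prod.snd (hbij.1 this)
    have hvkey : ∀ (s₁ s₂ : S) (h₂ : H),
        v (Ω.mul (Ω.act s₁ h₂) s₂) = v s₁ * v s₂ := by
      intro s₁ s₂ h₂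
      have key := hm (1, s₁) (h₂, s₂)
      rw [hψ, hψ, hψ] at key
      simpa [ExtendingDatum.Mul] using congrArg Prod.snd key
    have hvmul : ∀ s₁ s₂ : S, v (Ω.mul s₁ s₂) = v s₁ * v s₂ := by
      intro s₁ s₂
      have := hvkey s₁ s₂ 1
      rwa [Ω.act_one'] at this
    have htriv : ∀ (s : S) (h : H), Ω.act s h = s := by
      intro s h
      apply hvinj
      have h1' := hvkey s Ω.one h
      rw [Ω.mul_one'] at h1'
      have h2' := hvmul s Ω.one
      rw [Ω.mul_one'] at h2'
      rw [h1', ← h2']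
    refine ⟨htriv, r, v, hr1, ⟨hvinj, ?_⟩, hvmul, ?_, ?_⟩
    · intro g
      obtain ⟨⟨h, s⟩, hs⟩ := hbij.2 (1, g)
      exact ⟨s, by have := congrArg Prod.snd hs; rw [hψ] at this; exact this⟩
    · intro s h
      have key := hm (1, s) (h, Ω.one)
      have hM : Ω.Mul (1, s) (h, Ω.one) = (Ω.rho s h, s) := by
        simp [ExtendingDatum.Mul, Ω.f_one_right', Ω.mul_one', htriv]
      rw [hM, hψ, hψ, h1] at key
      have := congrArg Prod.fst key
      simp only [hn1, mul_one, one_mul] at this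
      rw [eq_mul_inv_iff_mul_eq]
      exact this
    · intro s₁ s₂
      have key := hm (1, s₁) (1, s₂)
      have hM : Ω.Mul (1, s₁) (1, s₂) = (Ω.f s₁ s₂, Ω.mul s₁ s₂) := by
        simp [ExtendingDatum.Mul, Ω.rho_one', Ω.act_one']
      rw [hM, hψ, hψ, hψ] at key
      have := congrArg Prod.fst key
      simp only [one_mul] at this
      rw [eq_mul_inv_iff_mul_eq, this]
  · rintro ⟨htriv, r, v, hr1, hvbij, hvmul, hrho, hf⟩
    have hv1 : v Ω.one = 1 := by
      have h := hvmul Ω.one Ω.one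
      rw [Ω.one_mul'] at h
      exact mul_left_cancel (a := v Ω.one) (by rw [← h, mul_one])
    refine ⟨fun p => (p.1 * r p.2, v p.2), ⟨?_, ?_⟩, ?_, ?_⟩
    · rintro ⟨h₁, s₁⟩ ⟨h₂, s₂⟩ hab
      have hs : s₁ = s₂ := hvbij.1 (congrArg Prod.snd hab)
      have hh := congrArg Prod.fst hab
      simp only [hs] at hh ⊢
      exact Prod.ext (mul_right_cancel hh) rfl
    · rintro ⟨k, g⟩
      obtain ⟨s, hs⟩ := hvbij.2 g
      exact ⟨(k * (r s)⁻¹, s), by simp [hs]⟩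
    · rintro ⟨h₁, s₁⟩ ⟨h₂, s₂⟩
      simp only [ExtendingDatum.Mul, htriv]
      refine Prod.ext ?_ (hvmul s₁ s₂)
      simp only [hrho, hf, hmul]
      group
    · intro h
      simp [hr1, hv1]
end

section
/- Let H be a group, Ω(H) = ((S, 1_S, ∗), ◁, ▷, f) a group extending structure of H, and (H, G, ▷', ◁') a matched pair of groups with bicrossed product H ⋈ G. Then the following are equivalent: (1) there exists an isomorphism of groups ψ : H ⋉ S → H ⋈ G with ψ(h, 1_S) = (h, 1_G) for all h ∈ H; (2) there exist a unitary map r : S → H and a bijective unitary map v : S → G with v(s ◁ h) = v(s) ◁' h for all s ∈ S, h ∈ H (an isomorphism of right H-sets), such that (s ▷ h) r(s ◁ h) = r(s) (v(s) ▷' h), v(s₁ ∗ s₂) = (v(s₁) ◁' r(s₂)) v(s₂), and f(s₁, s₂) = r(s₁) (v(s₁) ▷' r(s₂)) r(s₁ ∗ s₂)⁻¹ for all s, s₁, s₂ ∈ S and h ∈ H. -/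
universe u v

variable {H : Type u} [Group H] {S : Type v}

/-- **(Corollary: when a unified product is a bicrossed product, stabilizing `H`).**
Let `Ω(H)` be a group extending structure of `H` and `(H, G, ▷', ◁')` a matched pair
of groups, with bicrossed product `H ⋈ G` (multiplication
`(h₁, g₁)(h₂, g₂) = (h₁ (g₁ ▷' h₂), (g₁ ◁' h₂) g₂)` on `H × G`). Then there exists an
isomorphism of groups `ψ : H ⋉ S → H ⋈ G` with `ψ (h, 1_S) = (h, 1_G)` if and only if
there exist a unitary map `r : S → H` and a bijective unitary map `v : S → G` with
`v (s ◁ h) = v(s) ◁' h` (an isomorphism of right `H`-sets), such that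
`(s ▷ h) r(s ◁ h) = r(s) (v(s) ▷' h)`, `v(s₁ ∗ s₂) = (v(s₁) ◁' r(s₂)) v(s₂)` and
`f(s₁, s₂) = r(s₁) (v(s₁) ▷' r(s₂)) r(s₁ ∗ s₂)⁻¹`. -/
theorem unified_product_iso_bicrossed_product_iff
    (Ω : ExtendingDatum H S) (hΩ : IsGroupExtendingStructure Ω)
    {G : Type*} [Group G] (rho' : G → H → H) (act' : G → H → G)
    (hla1 : ∀ h : H, rho' 1 h = h)
    (hla2 : ∀ (g₁ g₂ : G) (h : H), rho' (g₁ * g₂) h = rho' g₁ (rho' g₂ h))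
    (hra1 : ∀ g : G, act' g 1 = g)
    (hra2 : ∀ (g : G) (h₁ h₂ : H), act' g (h₁ * h₂) = act' (act' g h₁) h₂)
    (hc1 : ∀ (g : G) (h₁ h₂ : H),
      rho' g (h₁ * h₂) = rho' g h₁ * rho' (act' g h₁) h₂)
    (hc2 : ∀ (g₁ g₂ : G) (h : H),
      act' (g₁ * g₂) h = act' g₁ (rho' g₂ h) * act' g₂ h) :
    (∃ ψ : H × S → H × G,
        Function.Bijective ψ ∧
        (∀ a b : H × S,
          ψ (Ω.Mul a b)
            = ((ψ a).1 * rho' (ψ a).2 (ψ b).1, act' (ψ a).2 (ψ b).1 * (ψ b).2)) ∧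
        (∀ h : H, ψ (h, Ω.one) = (h, 1))) ↔
      (∃ (r : S → H) (v : S → G),
        r Ω.one = 1 ∧ v Ω.one = 1 ∧ Function.Bijective v ∧
        (∀ (s : S) (h : H), v (Ω.act s h) = act' (v s) h) ∧
        (∀ (s : S) (h : H), Ω.rho s h * r (Ω.act s h) = r s * rho' (v s) h) ∧
        (∀ s₁ s₂ : S, v (Ω.mul s₁ s₂) = act' (v s₁) (r s₂) * v s₂) ∧
        (∀ s₁ s₂ : S,
          Ω.f s₁ s₂ = r s₁ * rho' (v s₁) (r s₂) * (r (Ω.mul s₁ s₂))⁻¹)) := by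

  have hact1 : ∀ h : H, act' 1 h = 1 := by
    intro h
    have := hc2 1 1 h
    simp [hla1] at this
    exact this
  have hrho1 : ∀ g : G, rho' g 1 = 1 := by
    intro g
    have := hc1 g 1 1
    simp [hra1] at this
    exact this
  constructor
  · rintro ⟨ψ, hbij, hmul, hunit⟩
    have key : ∀ (h : H) (s : S), ψ (h, s) = (h * (ψ (1, s)).1, (ψ (1, s)).2) := by
      intro h s
      have h1 : Ω.Mul (h, Ω.one) (1, s) = (h, s) := by
        simp [ExtendingDatum.Mul, Ω.act_one', Ω.f_one_left', Ω.one_mul',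
          Ω.one_act', Ω.one_rho', Ω.rho_one']
      have h2 := hmul (h, Ω.one) (1, s)
      rw [h1, hunit] at h2
      simpa only [hact1, one_mul, hla1] using h2
    have keym : ∀ s₁ s₂ : S,
        (Ω.f s₁ s₂ * (ψ (1, Ω.mul s₁ s₂)).1, (ψ (1, Ω.mul s₁ s₂)).2)
          = ((ψ (1, s₁)).1 * rho' (ψ (1, s₁)).2 (ψ (1, s₂)).1,
             act' (ψ (1, s₁)).2 (ψ (1, s₂)).1 * (ψ (1, s₂)).2) := by
      intro s₁ s₂
      have h1 : Ω.Mul (1, s₁) (1, s₂) = (Ω.f s₁ s₂, Ω.mul s₁ s₂) := by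
        simp [ExtendingDatum.Mul, Ω.rho_one', Ω.act_one']
      have h2 := hmul (1, s₁) (1, s₂)
      rw [h1, key] at h2
      simpa only [one_mul] using h2
    have keya : ∀ (s : S) (h : H),
        (Ω.rho s h * (ψ (1, Ω.act s h)).1, (ψ (1, Ω.act s h)).2)
          = ((ψ (1, s)).1 * rho' (ψ (1, s)).2 h, act' (ψ (1, s)).2 h) := by
      intro s h
      have h1 : Ω.Mul (1, s) (h, Ω.one) = (Ω.rho s h, Ω.act s h) := by
        simp [ExtendingDatum.Mul, Ω.f_one_right', Ω.mul_one']
      have h2 := hmul (1, s) (h, Ω.one)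
      rw [h1, hunit, key] at h2
      simpa only [one_mul, mul_one] using h2
    refine ⟨fun s => (ψ (1, s)).1, fun s => (ψ (1, s)).2, ?_, ?_, ?_, ?_, ?_, ?_, ?_⟩
    · simp only [hunit]
    · simp only [hunit]
    · constructor
      · intro s₁ s₂ hv
        simp only at hv
        have h2 : ψ ((ψ (1, s₂)).1 * ((ψ (1, s₁)).1)⁻¹, s₁) = ψ (1, s₂) := by
          rw [key, hv]
          have : ψ (1, s₂) = (1 * (ψ (1, s₂)).1, (ψ (1, s₂)).2) := key 1 s₂
          rw [this]
          simp
        have h3 := hbij.1 h2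
        exact (Prod.mk.injEq _ _ _ _ ▸ h3).2
      · intro g
        obtain ⟨⟨h, s⟩, hs⟩ := hbij.2 (1, g)
        rw [key] at hs
        exact ⟨s, (Prod.mk.injEq _ _ _ _ ▸ hs).2⟩
    · intro s h
      exact (Prod.mk.injEq _ _ _ _ ▸ keya s h).2
    · intro s h
      exact (Prod.mk.injEq _ _ _ _ ▸ keya s h).1
    · intro s₁ s₂
      exact (Prod.mk.injEq _ _ _ _ ▸ keym s₁ s₂).2
    · intro s₁ s₂
      have h3 := (Prod.mk.injEq _ _ _ _ ▸ keym s₁ s₂).1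
      simp only []
      rw [eq_mul_inv_iff_mul_eq]
      exact h3
  · rintro ⟨r, v, hr1, hv1, hvbij, hva, hrr, hvm, hf⟩
    refine ⟨fun x => (x.1 * r x.2, v x.2), ⟨?_, ?_⟩, ?_, ?_⟩
    · rintro ⟨h₁, s₁⟩ ⟨h₂, s₂⟩ hx
      simp only [Prod.mk.injEq] at hx
      have hs : s₁ = s₂ := hvbij.1 hx.2
      subst hs
      exact Prod.ext (mul_right_cancel hx.1) rfl
    · rintro ⟨h, g⟩
      obtain ⟨s, hs⟩ := hvbij.2 g
      exact ⟨(h * (r s)⁻¹, s), by simp [hs]⟩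
    · rintro ⟨h₁, s₁⟩ ⟨h₂, s₂⟩
      simp only [ExtendingDatum.Mul, Prod.mk.injEq]
      constructor
      · rw [hf]
        calc h₁ * Ω.rho s₁ h₂ * (r (Ω.act s₁ h₂) * rho' (v (Ω.act s₁ h₂)) (r s₂) *
              (r (Ω.mul (Ω.act s₁ h₂) s₂))⁻¹) * r (Ω.mul (Ω.act s₁ h₂) s₂)
            = h₁ * (Ω.rho s₁ h₂ * r (Ω.act s₁ h₂)) * rho' (v (Ω.act s₁ h₂)) (r s₂) := by
              group
          _ = h₁ * r s₁ * rho' (v s₁) (h₂ * r s₂) := by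
              rw [hrr, hva, hc1]; group
      · rw [hvm, hva, hra2]
    · intro h
      simp [hr1, hv1]
end

section
/- Let E be a group and H, S, T subgroups of E such that E has the two exact factorizations E = H S with H ∩ S = {1} and E = H T with H ∩ T = {1}. Let (H, S, ◁, ▷) and (H, T, ◁', ▷') be the associated matched pairs, defined by the unique decompositions s h = (s ▷ h)(s ◁ h) with s ▷ h ∈ H, s ◁ h ∈ S, and t h = (t ▷' h)(t ◁' h) with t ▷' h ∈ H, t ◁' h ∈ T. Then there exists a pair (r, v) of maps r : S → H, v : S → T with r(1) = 1, v(1) = 1 and v bijective, satisfying for all s, s₁, s₂ ∈ S and h ∈ H: r(s) v(s) = s; v(s ◁ h) = v(s) ◁' h; (s ▷ h) r(s ◁ h) = r(s) (v(s) ▷' h); v(s₁ s₂) = (v(s₁) ◁' r(s₂)) v(s₂); r(s₁ s₂) = r(s₁) (v(s₁) ▷' r(s₂)). -/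
/-- **(Answer to a question of Kuperberg.)** Let `E` be a group with two exact
factorizations `E = H S` and `E = H T` through subgroups `H, S, T`, and let
`(H, S, ◁, ▷)` and `(H, T, ◁', ▷')` be the associated matched pairs, defined by the
unique decompositions `s h = (s ▷ h)(s ◁ h)` and `t h = (t ▷' h)(t ◁' h)`. Then there
exists a pair of unitary maps `r : S → H`, `v : S → T` with `v` bijective such that
`r(s) v(s) = s`, `v (s ◁ h) = v(s) ◁' h`, `(s ▷ h) r(s ◁ h) = r(s) (v(s) ▷' h)`,
`v(s₁ s₂) = (v(s₁) ◁' r(s₂)) v(s₂)` and `r(s₁ s₂) = r(s₁) (v(s₁) ▷' r(s₂))`. -/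
theorem two_exact_factorizations {E : Type*} [Group E] (H S T : Subgroup E)
    (hfacS : ∀ x : E, ∃ h ∈ H, ∃ s ∈ S, x = h * s) (hHS : H ⊓ S = ⊥)
    (hfacT : ∀ x : E, ∃ h ∈ H, ∃ t ∈ T, x = h * t) (hHT : H ⊓ T = ⊥)
    (rho : S → H → H) (act : S → H → S)
    (hmp : ∀ (s : S) (h : H), (s : E) * (h : E) = (rho s h : E) * (act s h : E))
    (rho' : T → H → H) (act' : T → H → T)
    (hmp' : ∀ (t : T) (h : H), (t : E) * (h : E) = (rho' t h : E) * (act' t h : E)) :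
    ∃ (r : S → H) (v : S → T),
      r 1 = 1 ∧ v 1 = 1 ∧ Function.Bijective v ∧
      (∀ s : S, (r s : E) * (v s : E) = (s : E)) ∧
      (∀ (s : S) (h : H), v (act s h) = act' (v s) h) ∧
      (∀ (s : S) (h : H), rho s h * r (act s h) = r s * rho' (v s) h) ∧
      (∀ s₁ s₂ : S, v (s₁ * s₂) = act' (v s₁) (r s₂) * v s₂) ∧
      (∀ s₁ s₂ : S, r (s₁ * s₂) = r s₁ * rho' (v s₁) (r s₂)) := by
  -- uniqueness of H·T decompositions
  have uniqT : ∀ (h h' : H) (t t' : T), (h : E) * t = (h' : E) * t' → h = h' ∧ t = t' := by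
    intro h h' t t' he
    have m1 : ((h' : E)⁻¹ * h) ∈ H := H.mul_mem (H.inv_mem h'.2) h.2
    have e2 : ((h' : E)⁻¹ * h) = (t' : E) * (t : E)⁻¹ := by
      have h3 : (h' : E)⁻¹ * ((h : E) * t) = t' := by rw [he, inv_mul_cancel_left]
      rw [← h3]; group
    have m2 : ((h' : E)⁻¹ * h) ∈ T := by rw [e2]; exact T.mul_mem t'.2 (T.inv_mem t.2)
    have hbot : ((h' : E)⁻¹ * h) = 1 := by
      have : ((h' : E)⁻¹ * h) ∈ H ⊓ T := Subgroup.mem_inf.2 ⟨m1, m2⟩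
      rwa [hHT, Subgroup.mem_bot] at this
    have h1 : (h : E) = h' := (inv_mul_eq_one.mp hbot).symm
    refine ⟨Subtype.ext h1, Subtype.ext ?_⟩
    rw [h1] at he
    exact mul_left_cancel he
  -- uniqueness of H·S decompositions
  have uniqS : ∀ (h h' : H) (s s' : S), (h : E) * s = (h' : E) * s' → h = h' ∧ s = s' := by
    intro h h' s s' he
    have m1 : ((h' : E)⁻¹ * h) ∈ H := H.mul_mem (H.inv_mem h'.2) h.2
    have e2 : ((h' : E)⁻¹ * h) = (s' : E) * (s : E)⁻¹ := by
      have h3 : (h' : E)⁻¹ * ((h : E) * s) = s' := by rw [he, inv_mul_cancel_left]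
      rw [← h3]; group
    have m2 : ((h' : E)⁻¹ * h) ∈ S := by rw [e2]; exact S.mul_mem s'.2 (S.inv_mem s.2)
    have hbot : ((h' : E)⁻¹ * h) = 1 := by
      have : ((h' : E)⁻¹ * h) ∈ H ⊓ S := Subgroup.mem_inf.2 ⟨m1, m2⟩
      rwa [hHS, Subgroup.mem_bot] at this
    have h1 : (h : E) = h' := (inv_mul_eq_one.mp hbot).symm
    refine ⟨Subtype.ext h1, Subtype.ext ?_⟩
    rw [h1] at he
    exact mul_left_cancel he
  -- construct r, v
  have key : ∀ s : S, ∃ (h : H) (t : T), (s : E) = h * t := by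
    intro s
    obtain ⟨h, hh, t, ht, he⟩ := hfacT s
    exact ⟨⟨h, hh⟩, ⟨t, ht⟩, he⟩
  choose r v hrv using key
  refine ⟨r, v, ?_, ?_, ?_, fun s => (hrv s).symm, ?_, ?_, ?_, ?_⟩
  · exact ((uniqT (r 1) 1 (v 1) 1 (by simpa using (hrv 1).symm)).1)
  · exact ((uniqT (r 1) 1 (v 1) 1 (by simpa using (hrv 1).symm)).2)
  · constructor
    · intro s s' hvs
      have h2 : (s' : E) = r s' * v s := by rw [hrv s', hvs]
      have hmem : ((s : E) * (s' : E)⁻¹) ∈ H := by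
        have : (s : E) * (s' : E)⁻¹ = (r s : E) * (r s' : E)⁻¹ := by
          rw [hrv s, h2]; group
        rw [this]
        exact H.mul_mem (r s).2 (H.inv_mem (r s').2)
      have hmem2 : ((s : E) * (s' : E)⁻¹) ∈ S := S.mul_mem s.2 (S.inv_mem s'.2)
      have hbot : ((s : E) * (s' : E)⁻¹) = 1 := by
        have : ((s : E) * (s' : E)⁻¹) ∈ H ⊓ S := Subgroup.mem_inf.2 ⟨hmem, hmem2⟩
        rwa [hHS, Subgroup.mem_bot] at this
      exact Subtype.ext (mul_inv_eq_one.mp hbot)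
    · intro t
      obtain ⟨h, hh, s, hs, he⟩ := hfacS (t : E)
      have hinv : h⁻¹ ∈ H := H.inv_mem hh
      have hdec : ((⟨s, hs⟩ : S) : E) = ((⟨h⁻¹, hinv⟩ : H) : E) * t := by
        simp only [Subgroup.coe_mk]
        rw [he, inv_mul_cancel_left]
      exact ⟨⟨s, hs⟩, ((uniqT _ _ _ _ ((hrv ⟨s, hs⟩).symm.trans hdec)).2)⟩
  all_goals
    first
    | (intro s h
       have key2 : ((rho s h * r (act s h) : H) : E) * (v (act s h) : E) =
           ((r s * rho' (v s) h : H) : E) * (act' (v s) h : E) := by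
         push_cast
         rw [mul_assoc, ← hrv, ← hmp s h, hrv s, mul_assoc, hmp' (v s) h, ← mul_assoc]
       have := uniqT (rho s h * r (act s h)) (r s * rho' (v s) h)
         (v (act s h)) (act' (v s) h) key2
       first | exact this.2 | exact this.1)
    | (intro s₁ s₂
       have hdec : ((s₁ * s₂ : S) : E) =
           ((r s₁ * rho' (v s₁) (r s₂) : H) : E) * ((act' (v s₁) (r s₂) * v s₂ : T) : E) := by
         push_cast
         rw [hrv s₁, hrv s₂, mul_assoc, ← mul_assoc ((v s₁ : E)), hmp' (v s₁) (r s₂)]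
         group
       have := uniqT (r (s₁ * s₂)) (r s₁ * rho' (v s₁) (r s₂))
         (v (s₁ * s₂)) (act' (v s₁) (r s₂) * v s₂) ((hrv _).symm.trans hdec)
       first | exact this.2 | exact this.1)
end
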